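/- arXiv:2207.10946 — 4 statements merged into one kernel-verified Lean document; each statement's English description precedes it below -/
import Mathlib

section
/- Let Ω = B₁(0) ⊂ ℝ² be the open unit disc and define f : Ω → ℝ by f(x) = |x|. Then f ∈ H¹(Ω), its symmetric-decreasing rearrangement is f*(x) = √(1 − |x|²), and ∫_Ω |∇f*|² dx = +∞; in particular f* ∉ H¹(Ω), so the Pólya–Szegő inequality fails for general H¹ functions (without zero boundary trace). -/
open MeasureTheory Metric
open scoped ENNReal

/-- Radius of the centered ball with the same volume as `A`. -/
noncomputable def ballRad (n : ℕ) (A : Set (EuclideanSpace ℝ (Fin n))) : ℝ :=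
  ((volume A) / (volume (ball (0 : EuclideanSpace ℝ (Fin n)) 1))).toReal ^ ((n : ℝ)⁻¹)

/-- Symmetric rearrangement of a set: the centered open ball with the same volume. -/
noncomputable def schwarzSet (n : ℕ) (A : Set (EuclideanSpace ℝ (Fin n))) :
    Set (EuclideanSpace ℝ (Fin n)) := ball 0 (ballRad n A)

/-- Radially symmetric-decreasing (Schwarz) rearrangement of `f` on `Ω`,
defined by the layer-cake formula `f*(x) = ∫₀^∞ 𝟙_{{f>t}*}(x) dt`. -/
noncomputable def schwarz (n : ℕ) (Ω : Set (EuclideanSpace ℝ (Fin n)))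
    (f : EuclideanSpace ℝ (Fin n) → ℝ) (x : EuclideanSpace ℝ (Fin n)) : ℝ :=
  ∫ t in Set.Ioi (0 : ℝ),
    (schwarzSet n {y ∈ Ω | t < f y}).indicator (fun _ => (1 : ℝ)) x

section Aux

local notation "E2" => EuclideanSpace ℝ (Fin 2)

lemma aux_vol_ball_ne_zero : volume (ball (0 : E2) 1) ≠ 0 :=
  (measure_ball_pos _ _ one_pos).ne'

lemma aux_vol_ball_ne_top : volume (ball (0 : E2) 1) ≠ ⊤ := measure_ball_lt_top.ne

lemma aux_vol_ball (t : ℝ) (ht : 0 ≤ t) :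
    volume (ball (0 : E2) t) = ENNReal.ofReal (t ^ 2) * volume (ball (0 : E2) 1) := by
  rw [Measure.addHaar_ball _ _ ht, finrank_euclideanSpace_fin]

lemma aux_vol_closedBall (t : ℝ) (ht : 0 ≤ t) :
    volume (closedBall (0 : E2) t) = ENNReal.ofReal (t ^ 2) * volume (ball (0 : E2) 1) := by
  rw [Measure.addHaar_closedBall _ _ ht, finrank_euclideanSpace_fin]

lemma aux_diff_vol {t : ℝ} (ht0 : 0 ≤ t) (ht1 : t ≤ 1) (u : Set E2)
    (hsub : u ⊆ ball (0 : E2) 1) (hm : NullMeasurableSet u volume)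
    (hvol : volume u = ENNReal.ofReal (t ^ 2) * volume (ball (0 : E2) 1)) :
    volume (ball (0 : E2) 1 \ u) = ENNReal.ofReal (1 - t ^ 2) * volume (ball (0 : E2) 1) := by
  have hfin : volume u ≠ ⊤ := by
    rw [hvol]
    exact ENNReal.mul_ne_top ENNReal.ofReal_ne_top aux_vol_ball_ne_top
  rw [measure_diff hsub hm hfin, hvol]
  have hsplit : volume (ball (0 : E2) 1)
      = ENNReal.ofReal (1 - t ^ 2) * volume (ball (0 : E2) 1)
        + ENNReal.ofReal (t ^ 2) * volume (ball (0 : E2) 1) := by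
    rw [← add_mul, ← ENNReal.ofReal_add (by nlinarith) (by positivity)]
    norm_num
  nth_rewrite 1 [hsplit]
  rw [ENNReal.add_sub_cancel_right
    (ENNReal.mul_ne_top ENNReal.ofReal_ne_top aux_vol_ball_ne_top)]

lemma aux_rad {c : ℝ} (hc0 : 0 ≤ c) (A : Set E2)
    (hA : volume A = ENNReal.ofReal c * volume (ball (0 : E2) 1)) :
    ballRad 2 A = Real.sqrt c := by
  rw [ballRad, hA, mul_div_assoc, ENNReal.div_self aux_vol_ball_ne_zero aux_vol_ball_ne_top,
    mul_one, ENNReal.toReal_ofReal hc0, Real.sqrt_eq_rpow]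
  norm_num

lemma aux_superlevel_empty {t : ℝ} (ht : 1 ≤ t) :
    {y ∈ ball (0 : E2) 1 | t < ‖y‖} = ∅ := by
  ext y
  simp only [Set.mem_setOf_eq, Set.mem_empty_iff_false, iff_false, not_and, mem_ball_zero_iff,
    not_lt]
  intro hy
  linarith

lemma aux_superlevel {t : ℝ} (_ht0 : 0 < t) (_ht1 : t < 1) :
    {y ∈ ball (0 : E2) 1 | t < ‖y‖} = ball (0 : E2) 1 \ closedBall 0 t := by
  ext y
  simp only [Set.mem_setOf_eq, Set.mem_diff, mem_ball_zero_iff, mem_closedBall_zero_iff, not_le]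

end Aux

/-- On the unit disc `Ω = B₁(0) ⊂ ℝ²`, the function `f(x) = |x|` is in `H¹(Ω)`
(it is 1-Lipschitz), its symmetric-decreasing rearrangement is `f*(x) = √(1 − |x|²)`,
and the Dirichlet energy of `f*`, whose integrand is `|∇f*(x)|² = |x|²/(1−|x|²)`, is infinite;
in particular `f* ∉ H¹(Ω)`, so the Pólya–Szegő inequality fails without zero boundary trace. -/
theorem faber_krahn_stmt1 :
    LipschitzWith 1 (fun x : EuclideanSpace ℝ (Fin 2) => ‖x‖) ∧
    (∀ x ∈ ball (0 : EuclideanSpace ℝ (Fin 2)) 1,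
      schwarz 2 (ball (0 : EuclideanSpace ℝ (Fin 2)) 1) (fun y => ‖y‖) x
        = Real.sqrt (1 - ‖x‖ ^ 2)) ∧
    (∫⁻ x in ball (0 : EuclideanSpace ℝ (Fin 2)) 1,
        ENNReal.ofReal (‖x‖ ^ 2 / (1 - ‖x‖ ^ 2)) = ⊤) ∧
    ¬ IntegrableOn (fun x : EuclideanSpace ℝ (Fin 2) => ‖x‖ ^ 2 / (1 - ‖x‖ ^ 2))
        (ball (0 : EuclideanSpace ℝ (Fin 2)) 1) volume := by
  have hgm : Measurable (fun x : EuclideanSpace ℝ (Fin 2) => ‖x‖ ^ 2 / (1 - ‖x‖ ^ 2)) :=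
    (measurable_norm.pow_const 2).div (measurable_const.sub (measurable_norm.pow_const 2))
  have hgnn : 0 ≤ᵐ[volume.restrict (ball (0 : EuclideanSpace ℝ (Fin 2)) 1)]
      (fun x => ‖x‖ ^ 2 / (1 - ‖x‖ ^ 2)) := by
    filter_upwards [ae_restrict_mem measurableSet_ball] with x hx
    have hx1 : ‖x‖ < 1 := mem_ball_zero_iff.mp hx
    have : 0 < 1 - ‖x‖ ^ 2 := by nlinarith [norm_nonneg x]
    positivity
  -- Part 2: the schwarz rearrangement formula
  have part2 : ∀ x ∈ ball (0 : EuclideanSpace ℝ (Fin 2)) 1,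
      schwarz 2 (ball (0 : EuclideanSpace ℝ (Fin 2)) 1) (fun y => ‖y‖) x
        = Real.sqrt (1 - ‖x‖ ^ 2) := by
    intro x hx
    have hx1 : ‖x‖ < 1 := mem_ball_zero_iff.mp hx
    set s : ℝ := Real.sqrt (1 - ‖x‖ ^ 2) with hs
    have hs0 : 0 ≤ s := Real.sqrt_nonneg _
    have hs1 : s ≤ 1 := Real.sqrt_le_one.mpr (by nlinarith [norm_nonneg x])
    have key : ∀ t ∈ Set.Ioi (0 : ℝ),
        (schwarzSet 2 {y ∈ ball (0 : EuclideanSpace ℝ (Fin 2)) 1 | t < ‖y‖}).indicator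
            (fun _ => (1 : ℝ)) x
          = (Set.Ioo 0 s).indicator (fun _ => (1 : ℝ)) t := by
      intro t ht
      have ht0 : 0 < t := ht
      by_cases ht1 : 1 ≤ t
      · have h1 : schwarzSet 2 {y ∈ ball (0 : EuclideanSpace ℝ (Fin 2)) 1 | t < ‖y‖} = ∅ := by
          rw [schwarzSet, aux_superlevel_empty ht1]
          have h0 : ballRad 2 (∅ : Set (EuclideanSpace ℝ (Fin 2))) = 0 := by
            have := aux_rad le_rfl (∅ : Set (EuclideanSpace ℝ (Fin 2))) (by simp)
            simpa using this
          rw [h0, ball_zero]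
        have h2 : t ∉ Set.Ioo (0 : ℝ) s := fun h => absurd h.2 (by linarith)
        rw [h1, Set.indicator_empty, Set.indicator_of_notMem h2]
      · push_neg at ht1
        have hrad : ballRad 2 {y ∈ ball (0 : EuclideanSpace ℝ (Fin 2)) 1 | t < ‖y‖}
            = Real.sqrt (1 - t ^ 2) := by
          apply aux_rad (by nlinarith) _
          rw [aux_superlevel ht0 ht1]
          exact aux_diff_vol ht0.le ht1.le _ (closedBall_subset_ball ht1)
            measurableSet_closedBall.nullMeasurableSet (aux_vol_closedBall t ht0.le)
        have hiff : x ∈ schwarzSet 2 {y ∈ ball (0 : EuclideanSpace ℝ (Fin 2)) 1 | t < ‖y‖}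
            ↔ t ∈ Set.Ioo (0 : ℝ) s := by
          rw [schwarzSet, hrad, mem_ball_zero_iff, Set.mem_Ioo]
          constructor
          · intro h
            refine ⟨ht0, ?_⟩
            rw [Real.lt_sqrt (norm_nonneg x)] at h
            rw [hs, Real.lt_sqrt ht0.le]
            nlinarith
          · rintro ⟨-, h⟩
            rw [hs, Real.lt_sqrt ht0.le] at h
            rw [Real.lt_sqrt (norm_nonneg x)]
            nlinarith
        by_cases hmem : x ∈ schwarzSet 2 {y ∈ ball (0 : EuclideanSpace ℝ (Fin 2)) 1 | t < ‖y‖}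
        · rw [Set.indicator_of_mem hmem, Set.indicator_of_mem (hiff.mp hmem)]
        · rw [Set.indicator_of_notMem hmem,
            Set.indicator_of_notMem (fun h => hmem (hiff.mpr h))]
    rw [schwarz, setIntegral_congr_fun measurableSet_Ioi key,
      setIntegral_indicator measurableSet_Ioo,
      Set.Ioi_inter_Ioo, max_self]
    simp [Real.volume_Ioo, ENNReal.toReal_ofReal hs0]
    exact hs0
  -- Part 3: the lintegral is infinite
  have part3 : ∫⁻ x in ball (0 : EuclideanSpace ℝ (Fin 2)) 1,
      ENNReal.ofReal (‖x‖ ^ 2 / (1 - ‖x‖ ^ 2)) = ⊤ := by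
    rw [lintegral_eq_lintegral_meas_le _ hgnn hgm.aemeasurable]
    have hlow : ∀ t ∈ Set.Ioi (0 : ℝ),
        ENNReal.ofReal ((1 + t)⁻¹) * volume (ball (0 : EuclideanSpace ℝ (Fin 2)) 1)
          ≤ (volume.restrict (ball (0 : EuclideanSpace ℝ (Fin 2)) 1))
              {a | t ≤ ‖a‖ ^ 2 / (1 - ‖a‖ ^ 2)} := by
      intro t ht
      have ht0 : 0 < t := ht
      set r : ℝ := Real.sqrt (t / (1 + t)) with hr
      have hrsq : r ^ 2 = t / (1 + t) := Real.sq_sqrt (by positivity)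
      have hr1 : r ≤ 1 := Real.sqrt_le_one.mpr (by rw [div_le_one (by linarith)]; linarith)
      have hsub : ball (0 : EuclideanSpace ℝ (Fin 2)) 1 \ ball 0 r
          ⊆ {a | t ≤ ‖a‖ ^ 2 / (1 - ‖a‖ ^ 2)} := by
        intro y hy
        have hy1 : ‖y‖ < 1 := mem_ball_zero_iff.mp hy.1
        have hy2 : r ≤ ‖y‖ := by
          by_contra h
          exact hy.2 (mem_ball_zero_iff.mpr (lt_of_not_ge h))
        have hden : 0 < 1 - ‖y‖ ^ 2 := by nlinarith [norm_nonneg y]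
        have hsq : t / (1 + t) ≤ ‖y‖ ^ 2 := by
          rw [← hrsq]; exact pow_le_pow_left₀ (Real.sqrt_nonneg _) hy2 2
        rw [div_le_iff₀ (by linarith)] at hsq
        simp only [Set.mem_setOf_eq, le_div_iff₀ hden]
        nlinarith
      calc ENNReal.ofReal ((1 + t)⁻¹) * volume (ball (0 : EuclideanSpace ℝ (Fin 2)) 1)
          = volume (ball (0 : EuclideanSpace ℝ (Fin 2)) 1 \ ball 0 r) := by
            rw [aux_diff_vol (Real.sqrt_nonneg _) hr1 _ (ball_subset_ball hr1)
              measurableSet_ball.nullMeasurableSet (aux_vol_ball r (Real.sqrt_nonneg _)), hrsq]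
            congr 2
            field_simp
            ring
        _ ≤ _ := by
            rw [Measure.restrict_apply' measurableSet_ball]
            exact measure_mono (Set.subset_inter hsub Set.diff_subset)
    have hinner : ∫⁻ t in Set.Ioi (0 : ℝ), ENNReal.ofReal ((1 + t)⁻¹) = ⊤ := by
      by_contra h
      have hint : IntegrableOn (fun t : ℝ => (1 + t)⁻¹) (Set.Ioi 0) volume := by
        refine (lintegral_ofReal_ne_top_iff_integrable
          ((measurable_const.add measurable_id).inv.aestronglyMeasurable) ?_).mp h
        filter_upwards [ae_restrict_mem measurableSet_Ioi] with t ht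
        have ht0 : (0 : ℝ) < t := ht
        exact (inv_pos.mpr (by linarith : (0:ℝ) < 1 + t)).le
      have h1 : IntegrableOn (fun t : ℝ => (1 + t)⁻¹) (Set.Ioi 1) volume :=
        hint.mono_set (Set.Ioi_subset_Ioi zero_le_one)
      have h2 : IntegrableOn (fun t : ℝ => t⁻¹) (Set.Ioi 1) volume := by
        apply Integrable.mono' (h1.const_mul 2) measurable_inv.aestronglyMeasurable
        filter_upwards [ae_restrict_mem measurableSet_Ioi] with t ht
        have ht1 : (1 : ℝ) < t := ht
        rw [Real.norm_eq_abs, abs_of_nonneg (inv_nonneg.mpr (by linarith))]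
        rw [show (2 : ℝ) * (1 + t)⁻¹ = 2 / (1 + t) by ring, inv_eq_one_div,
          div_le_div_iff₀ (by linarith) (by linarith)]
        linarith
      have h3 : ¬ IntegrableOn (fun t : ℝ => t ^ (-1 : ℝ)) (Set.Ioi 1) volume := by
        rw [integrableOn_Ioi_rpow_iff one_pos]
        norm_num
      exact h3 (h2.congr_fun (fun t ht => (Real.rpow_neg_one t).symm) measurableSet_Ioi)
    refine top_le_iff.mp ?_
    calc (⊤ : ℝ≥0∞) = (∫⁻ t in Set.Ioi (0 : ℝ), ENNReal.ofReal ((1 + t)⁻¹))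
          * volume (ball (0 : EuclideanSpace ℝ (Fin 2)) 1) := by
          rw [hinner, ENNReal.top_mul aux_vol_ball_ne_zero]
      _ = ∫⁻ t in Set.Ioi (0 : ℝ), ENNReal.ofReal ((1 + t)⁻¹)
          * volume (ball (0 : EuclideanSpace ℝ (Fin 2)) 1) := by
          exact (lintegral_mul_const _ (f := fun t : ℝ => ENNReal.ofReal ((1 + t)⁻¹))
            (by fun_prop)).symm
      _ ≤ _ := setLIntegral_mono' measurableSet_Ioi hlow
  refine ⟨lipschitzWith_one_norm, part2, part3, ?_⟩
  intro hint
  exact (lintegral_ofReal_ne_top_iff_integrable hgm.aestronglyMeasurable hgnn).mpr hint part3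
end

section
/- Let ψ : [0,1] → ℝ be C², with ψ(0) = ψ(1) = 0, ψ > 0 on (0,1). Suppose η : [0,∞) → [1/2, 1) is differentiable, nondecreasing, solves η'(t) = √(2ψ(η(t))) for all t ≥ 0, and satisfies η(t) → 1 as t → ∞. Then ψ'(1) = 0. -/
open MeasureTheory

/-- If `ψ ∈ C²([0,1])` with `ψ(0)=ψ(1)=0`, `ψ>0` on `(0,1)`, and
`η : [0,∞) → [1/2,1)` is a nondecreasing solution of `η' = √(2ψ(η))` with `η(t) → 1`
as `t → ∞`, then `ψ'(1) = 0`. -/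
theorem faber_krahn_stmt2 (ψ η : ℝ → ℝ)
    (hψC2 : ContDiffOn ℝ 2 ψ (Set.Icc 0 1)) (hψ0 : ψ 0 = 0) (hψ1 : ψ 1 = 0)
    (hψpos : ∀ s ∈ Set.Ioo (0 : ℝ) 1, 0 < ψ s)
    (hrange : ∀ t ≥ (0 : ℝ), η t ∈ Set.Ico (1 / 2 : ℝ) 1)
    (hODE : ∀ t ≥ (0 : ℝ), HasDerivAt η (Real.sqrt (2 * ψ (η t))) t)
    (hmono : MonotoneOn η (Set.Ici 0))
    (hlim : Filter.Tendsto η Filter.atTop (nhds 1)) :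
    derivWithin ψ (Set.Icc 0 1) 1 = 0 := by
  set d := derivWithin ψ (Set.Icc 0 1) 1 with hdd
  have h1mem : (1:ℝ) ∈ Set.Icc (0:ℝ) 1 := by norm_num
  have hdiff : DifferentiableWithinAt ℝ ψ (Set.Icc 0 1) 1 :=
    (hψC2.differentiableOn (by norm_num)) 1 h1mem
  have hder : HasDerivWithinAt ψ d (Set.Icc 0 1) 1 := hdiff.hasDerivWithinAt
  have hslope : Filter.Tendsto (slope ψ 1) (nhdsWithin 1 (Set.Icc 0 1 \ {1})) (nhds d) :=
    hasDerivWithinAt_iff_tendsto_slope.mp hder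
  -- Part 1 : d ≤ 0
  have hdle : d ≤ 0 := by
    have hsub : Set.Ico (1/2:ℝ) 1 ⊆ Set.Icc 0 1 \ {1} := by
      rintro x ⟨hx1, hx2⟩
      exact ⟨⟨by linarith, le_of_lt hx2⟩, by simp [ne_of_lt hx2]⟩
    haveI : (nhdsWithin (1:ℝ) (Set.Ico (1/2:ℝ) 1)).NeBot := by
      apply mem_closure_iff_nhdsWithin_neBot.mp
      rw [closure_Ico (by norm_num : (1/2:ℝ) ≠ 1)]
      exact ⟨by norm_num, le_refl 1⟩
    have hslope' : Filter.Tendsto (slope ψ 1) (nhdsWithin 1 (Set.Ico (1/2:ℝ) 1)) (nhds d) :=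
      hslope.mono_left (nhdsWithin_mono _ hsub)
    refine le_of_tendsto hslope' ?_
    filter_upwards [self_mem_nhdsWithin] with s hs
    have hs1 : s < 1 := hs.2
    have hψs : 0 < ψ s := hψpos s ⟨by linarith [hs.1], hs1⟩
    have : slope ψ 1 s = ψ s / (s - 1) := by simp [slope_def_field, hψ1]
    rw [this]
    exact le_of_lt (div_neg_of_pos_of_neg hψs (by linarith))
  -- Part 2 : ¬ (d < 0)
  rcases lt_or_eq_of_le hdle with hdlt | hdeq
  · exfalso
    set c := -d with hc
    have hcpos : 0 < c := by simp [hc]; linarith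
    have hev : ∀ᶠ s in nhdsWithin 1 (Set.Icc 0 1 \ {1}), slope ψ 1 s < d / 2 :=
      hslope.eventually_lt_const (by linarith)
    rw [eventually_nhdsWithin_iff, Metric.eventually_nhds_iff] at hev
    obtain ⟨δ, hδpos, hδ⟩ := hev
    -- find t0
    have hevT : ∀ᶠ t in Filter.atTop, 1 - δ < η t :=
      hlim.eventually (eventually_gt_nhds (by linarith))
    obtain ⟨t1, ht1⟩ := Filter.eventually_atTop.mp hevT
    set t0 := max t1 0 with ht0
    have ht0nn : (0:ℝ) ≤ t0 := le_max_right _ _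
    -- key estimate for t ≥ t0
    have hkey : ∀ t ≥ t0, Real.sqrt c * Real.sqrt (1 - η t) ≤ Real.sqrt (2 * ψ (η t)) := by
      intro t ht
      have htnn : (0:ℝ) ≤ t := le_trans ht0nn ht
      have hη := hrange t htnn
      have hηδ : 1 - δ < η t := ht1 t (le_trans (le_max_left _ _) ht)
      have hmem : η t ∈ Set.Icc (0:ℝ) 1 \ {1} :=
        ⟨⟨by linarith [hη.1], le_of_lt hη.2⟩, by simp [ne_of_lt hη.2]⟩
      have hdist : dist (η t) 1 < δ := by
        rw [Real.dist_eq, abs_lt]; constructor <;> [linarith; linarith [hη.2]]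
      have hsl := hδ hdist hmem
      have hsl' : ψ (η t) / (η t - 1) < d / 2 := by
        rwa [slope_def_field, hψ1, sub_zero] at hsl
      have hlt : c * (1 - η t) < 2 * ψ (η t) := by
        have h1 : η t - 1 < 0 := by linarith [hη.2]
        have := (div_lt_iff_of_neg h1).mp hsl'
        nlinarith
      calc Real.sqrt c * Real.sqrt (1 - η t) = Real.sqrt (c * (1 - η t)) :=
            (Real.sqrt_mul hcpos.le _).symm
        _ ≤ Real.sqrt (2 * ψ (η t)) := Real.sqrt_le_sqrt hlt.le
    -- define v and show antitone
    set v : ℝ → ℝ := fun t => Real.sqrt (1 - η t) + (Real.sqrt c / 2) * t with hv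
    have hvd : ∀ t ≥ t0, ∃ e ≤ 0, HasDerivAt v e t := by
      intro t ht
      have htnn : (0:ℝ) ≤ t := le_trans ht0nn ht
      have hη := hrange t htnn
      have hpos : 0 < 1 - η t := by linarith [hη.2]
      have h1 : HasDerivAt (fun t => 1 - η t) (-(Real.sqrt (2 * ψ (η t)))) t := by
        exact (hODE t htnn).const_sub 1
      have h2 : HasDerivAt (fun t => Real.sqrt (1 - η t))
          (1 / (2 * Real.sqrt (1 - η t)) * (-(Real.sqrt (2 * ψ (η t))))) t :=
        (Real.hasDerivAt_sqrt (ne_of_gt hpos)).comp t h1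
      have h3 : HasDerivAt v
          (1 / (2 * Real.sqrt (1 - η t)) * (-(Real.sqrt (2 * ψ (η t)))) + Real.sqrt c / 2) t := by
        simpa using h2.fun_add ((hasDerivAt_id t).const_mul (Real.sqrt c / 2))
      refine ⟨_, ?_, h3⟩
      have hsq : 0 < Real.sqrt (1 - η t) := Real.sqrt_pos.mpr hpos
      have hk := hkey t ht
      rw [div_mul_eq_mul_div, one_mul, div_add' _ _ _ (by positivity), div_nonpos_iff]
      right
      refine ⟨by nlinarith [hk], by positivity⟩
    have hanti : AntitoneOn v (Set.Ici t0) := by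
      have hdiffv : ∀ t ∈ Set.Ici t0, DifferentiableAt ℝ v t := by
        intro t ht; obtain ⟨e, _, he⟩ := hvd t ht; exact he.differentiableAt
      apply antitoneOn_of_deriv_nonpos (convex_Ici t0)
      · exact fun t ht => (hdiffv t ht).continuousAt.continuousWithinAt
      · intro t ht
        rw [interior_Ici] at ht
        exact (hdiffv t (Set.Ioi_subset_Ici_self ht)).differentiableWithinAt
      · intro t ht
        rw [interior_Ici] at ht
        obtain ⟨e, he0, he⟩ := hvd t (le_of_lt ht)
        rw [he.deriv]; exact he0
    -- contradiction
    set s0 := Real.sqrt (1 - η t0) with hs0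
    have hs0nn : 0 ≤ s0 := Real.sqrt_nonneg _
    set T := t0 + 2 * (s0 + 1) / Real.sqrt c with hT
    have hscpos : 0 < Real.sqrt c := Real.sqrt_pos.mpr hcpos
    have hTge : t0 ≤ T := by
      rw [hT]
      have : 0 < 2 * (s0 + 1) / Real.sqrt c := by positivity
      linarith
    have := hanti (Set.self_mem_Ici) (Set.mem_Ici.mpr hTge) hTge
    have hvT : Real.sqrt (1 - η T) + Real.sqrt c / 2 * T ≤ s0 + Real.sqrt c / 2 * t0 := this
    have hsqT : 0 ≤ Real.sqrt (1 - η T) := Real.sqrt_nonneg _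
    have hmul : Real.sqrt c / 2 * (T - t0) = s0 + 1 := by
      rw [hT]; field_simp; ring
    nlinarith
  · exact hdeq
end

section
/- (Rearrangement decreases the penalized eigenvalue quadratic form.) Let Ω = B_R(0) ⊂ ℝⁿ, b : [0,1] → [0, β] continuous and strictly decreasing with b(0) = β, let φ : Ω → [0,1] be measurable and w : Ω → [0,∞) be in L²(Ω). Then ∫_Ω b(φ*)·(w*)² dx ≤ ∫_Ω b(φ)·w² dx, where * denotes symmetric-decreasing rearrangement on Ω. -/
open MeasureTheory Metric

namespace FK

variable {n : ℕ}

lemma unit_pos : 0 < volume (ball (0 : EuclideanSpace ℝ (Fin n)) 1) :=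
  measure_ball_pos _ _ one_pos

lemma unit_ne_top : volume (ball (0 : EuclideanSpace ℝ (Fin n)) 1) ≠ ⊤ :=
  measure_ball_lt_top.ne

lemma nontriv (hn : n ≠ 0) : Nontrivial (EuclideanSpace ℝ (Fin n)) := by
  haveI : Nonempty (Fin n) := Fin.pos_iff_nonempty.mp (Nat.pos_of_ne_zero hn)
  infer_instance

lemma vol_ball (hn : n ≠ 0) {r : ℝ} (hr : 0 ≤ r) :
    volume (ball (0 : EuclideanSpace ℝ (Fin n)) r)
      = ENNReal.ofReal (r ^ n) * volume (ball (0 : EuclideanSpace ℝ (Fin n)) 1) := by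
  haveI := nontriv hn
  simpa [finrank_euclideanSpace_fin] using
    Measure.addHaar_ball (volume : Measure (EuclideanSpace ℝ (Fin n))) 0 hr

lemma ballRad_nonneg (A : Set (EuclideanSpace ℝ (Fin n))) : 0 ≤ ballRad n A :=
  Real.rpow_nonneg ENNReal.toReal_nonneg _

lemma vol_schwarzSet (hn : n ≠ 0) (A : Set (EuclideanSpace ℝ (Fin n)))
    (hA : volume A ≠ ⊤) : volume (schwarzSet n A) = volume A := by
  have hc0 : volume (ball (0 : EuclideanSpace ℝ (Fin n)) 1) ≠ 0 := unit_pos.ne'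
  have hct := unit_ne_top (n := n)
  have hdiv : volume A / volume (ball (0 : EuclideanSpace ℝ (Fin n)) 1) ≠ ⊤ :=
    (ENNReal.div_lt_top hA hc0).ne
  have hpow : (ballRad n A) ^ n
      = (volume A / volume (ball (0 : EuclideanSpace ℝ (Fin n)) 1)).toReal := by
    rw [ballRad, ← Real.rpow_natCast (_ ^ ((n : ℝ)⁻¹)) n,
      ← Real.rpow_mul ENNReal.toReal_nonneg]
    rw [inv_mul_cancel₀ (by exact_mod_cast hn : (n : ℝ) ≠ 0), Real.rpow_one]
  rw [schwarzSet, vol_ball hn (ballRad_nonneg A), hpow, ENNReal.ofReal_toReal hdiv,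
    ENNReal.div_mul_cancel hc0 hct]

lemma ballRad_le {A B : Set (EuclideanSpace ℝ (Fin n))} (hB : volume B ≠ ⊤)
    (hAB : volume A ≤ volume B) : ballRad n A ≤ ballRad n B := by
  have hc0 : volume (ball (0 : EuclideanSpace ℝ (Fin n)) 1) ≠ 0 := unit_pos.ne'
  refine Real.rpow_le_rpow ENNReal.toReal_nonneg ?_ (by positivity)
  exact ENNReal.toReal_mono (ENNReal.div_lt_top hB hc0).ne
    (ENNReal.div_le_div_right hAB _)

lemma mem_schwarzSet {A : Set (EuclideanSpace ℝ (Fin n))} {x : EuclideanSpace ℝ (Fin n)} :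
    x ∈ schwarzSet n A ↔ ‖x‖ < ballRad n A := by
  simp [schwarzSet, mem_ball_zero_iff]

lemma ballRad_ball (hn : n ≠ 0) {R : ℝ} (hR : 0 ≤ R) :
    ballRad n (ball (0 : EuclideanSpace ℝ (Fin n)) R) = R := by
  have hc0 : volume (ball (0 : EuclideanSpace ℝ (Fin n)) 1) ≠ 0 := unit_pos.ne'
  have hct := unit_ne_top (n := n)
  rw [ballRad, vol_ball hn hR, mul_div_assoc (ENNReal.ofReal (R ^ n)) _ _, ENNReal.div_self hc0 hct, mul_one,
    ENNReal.toReal_ofReal (by positivity), ← Real.rpow_natCast R n,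
    ← Real.rpow_mul hR, mul_inv_cancel₀ (by exact_mod_cast hn : (n : ℝ) ≠ 0),
    Real.rpow_one]


/-! ### Level sets and radii -/

def lev (n : ℕ) (R : ℝ) (f : EuclideanSpace ℝ (Fin n) → ℝ) (t : ℝ) :
    Set (EuclideanSpace ℝ (Fin n)) :=
  {y ∈ ball (0 : EuclideanSpace ℝ (Fin n)) R | t < f y}

noncomputable def rad (n : ℕ) (R : ℝ) (f : EuclideanSpace ℝ (Fin n) → ℝ) (t : ℝ) : ℝ :=
  ballRad n (lev n R f t)

variable {R : ℝ} {f : EuclideanSpace ℝ (Fin n) → ℝ}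

lemma lev_eq (t : ℝ) : lev n R f t
    = {x | t < f x} ∩ ball (0 : EuclideanSpace ℝ (Fin n)) R := by
  ext y; exact ⟨fun h => ⟨h.2, h.1⟩, fun h => ⟨h.2, h.1⟩⟩

lemma lev_meas (hf : Measurable f) (t : ℝ) : MeasurableSet (lev n R f t) := by
  rw [lev_eq]; exact (hf measurableSet_Ioi).inter measurableSet_ball

lemma vol_lev_ne_top (t : ℝ) : volume (lev n R f t) ≠ ⊤ := by
  refine ((measure_mono (fun y hy => hy.1)).trans_lt measure_ball_lt_top).ne

lemma lev_anti : Antitone (lev n R f) := by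
  intro s t hst y hy
  exact ⟨hy.1, hst.trans_lt hy.2⟩

lemma rad_anti : Antitone (rad n R f) := fun s t hst =>
  ballRad_le (vol_lev_ne_top s) (measure_mono (lev_anti hst))

lemma rad_nonneg (t : ℝ) : 0 ≤ rad n R f t := ballRad_nonneg _

lemma rad_le_R (hn : n ≠ 0) (hR : 0 ≤ R) (t : ℝ) : rad n R f t ≤ R := by
  have := ballRad_le (A := lev n R f t)
    (B := ball (0 : EuclideanSpace ℝ (Fin n)) R)
    measure_ball_lt_top.ne (measure_mono (fun y hy => hy.1))
  rwa [ballRad_ball hn hR] at this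

lemma vol_ball_rad (hn : n ≠ 0) (t : ℝ) :
    volume (ball (0 : EuclideanSpace ℝ (Fin n)) (rad n R f t)) = volume (lev n R f t) :=
  vol_schwarzSet hn _ (vol_lev_ne_top t)

/-- `schwarz` as the measure of a level set in `t`. -/
lemma schwarz_eq (f : EuclideanSpace ℝ (Fin n) → ℝ) (x : EuclideanSpace ℝ (Fin n)) :
    schwarz n (ball (0 : EuclideanSpace ℝ (Fin n)) R) f x
      = (volume {t : ℝ | 0 < t ∧ ‖x‖ < rad n R f t}).toReal := by
  have hS : MeasurableSet {t : ℝ | ‖x‖ < rad n R f t} :=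
    measurableSet_lt measurable_const (rad_anti (f := f)).measurable
  have h1 : ∀ t : ℝ, (schwarzSet n {y ∈ ball (0 : EuclideanSpace ℝ (Fin n)) R | t < f y}).indicator
      (fun _ => (1 : ℝ)) x = {t : ℝ | ‖x‖ < rad n R f t}.indicator (fun _ => (1 : ℝ)) t := by
    intro t
    show (schwarzSet n (lev n R f t)).indicator (fun _ => (1 : ℝ)) x
      = {t : ℝ | ‖x‖ < rad n R f t}.indicator (fun _ => (1 : ℝ)) t
    simp only [Set.indicator_apply, Set.mem_setOf_eq]
    by_cases h : ‖x‖ < rad n R f t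
    · rw [if_pos h, Set.indicator_of_mem (mem_schwarzSet.mpr h)]
    · rw [if_neg h, Set.indicator_of_notMem (fun hc => h (mem_schwarzSet.mp hc))]
  calc schwarz n (ball (0 : EuclideanSpace ℝ (Fin n)) R) f x
      = ∫ t in Set.Ioi (0:ℝ), {t : ℝ | ‖x‖ < rad n R f t}.indicator (fun _ => (1:ℝ)) t := by
        unfold schwarz; exact integral_congr_ae (Filter.Eventually.of_forall fun t => h1 t)
    _ = ∫ t in Set.Ioi (0:ℝ) ∩ {t : ℝ | ‖x‖ < rad n R f t}, (1:ℝ) := by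
        rw [setIntegral_indicator hS]
    _ = (volume (Set.Ioi (0:ℝ) ∩ {t : ℝ | ‖x‖ < rad n R f t})).toReal • (1:ℝ) :=
        setIntegral_const 1
    _ = (volume {t : ℝ | 0 < t ∧ ‖x‖ < rad n R f t}).toReal := by
        have hset : Set.Ioi (0:ℝ) ∩ {t : ℝ | ‖x‖ < rad n R f t}
            = {t : ℝ | 0 < t ∧ ‖x‖ < rad n R f t} := by
          ext u; simp [Set.mem_setOf_eq]
        rw [hset, smul_eq_mul, mul_one]

lemma Sx_meas (x : EuclideanSpace ℝ (Fin n)) :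
    MeasurableSet {t : ℝ | 0 < t ∧ ‖x‖ < rad n R f t} := by
  have hS : MeasurableSet {t : ℝ | ‖x‖ < rad n R f t} :=
    measurableSet_lt measurable_const (rad_anti (f := f)).measurable
  have : {t : ℝ | 0 < t ∧ ‖x‖ < rad n R f t}
      = Set.Ioi (0:ℝ) ∩ {t : ℝ | ‖x‖ < rad n R f t} := by
    ext t; simp [Set.mem_setOf_eq, Set.mem_Ioi]
  rw [this]; exact measurableSet_Ioi.inter hS

lemma schwarz_nonneg (Ω : Set (EuclideanSpace ℝ (Fin n)))
    (f : EuclideanSpace ℝ (Fin n) → ℝ) (x : EuclideanSpace ℝ (Fin n)) :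
    0 ≤ schwarz n Ω f x := by
  refine integral_nonneg fun t => Set.indicator_nonneg (fun _ _ => zero_le_one) _

lemma vol_Sx_ne_top (hn : n ≠ 0) (hf : Measurable f) {x : EuclideanSpace ℝ (Fin n)}
    (hx : x ≠ 0) : volume {t : ℝ | 0 < t ∧ ‖x‖ < rad n R f t} ≠ ⊤ := by
  -- find `k` with `rad n R f k < ‖x‖`
  have hxpos : 0 < ‖x‖ := norm_pos_iff.mpr hx
  have hbp : 0 < volume (ball (0 : EuclideanSpace ℝ (Fin n)) ‖x‖) :=
    measure_ball_pos _ _ hxpos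
  have hanti : Antitone (fun k : ℕ => lev n R f k) := by
    intro k m hkm
    exact lev_anti (by exact_mod_cast hkm)
  have hinter : (⋂ k : ℕ, lev n R f k) = ∅ := by
    ext y
    simp only [Set.mem_iInter, Set.mem_empty_iff_false, iff_false]
    intro hy
    obtain ⟨k, hk⟩ := exists_nat_gt (f y)
    exact absurd (hy k).2 (not_lt.mpr hk.le)
  have htend : Filter.Tendsto (fun k : ℕ => volume (lev n R f k)) Filter.atTop (nhds 0) := by
    have := tendsto_measure_iInter_atTop
      (μ := (volume : Measure (EuclideanSpace ℝ (Fin n))))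
      (s := fun k : ℕ => lev n R f k)
      (fun k => (lev_meas hf _).nullMeasurableSet) hanti ⟨0, vol_lev_ne_top _⟩
    rwa [hinter, measure_empty] at this
  obtain ⟨k, hk⟩ := (htend.eventually (gt_mem_nhds hbp)).exists
  have hradk : rad n R f k < ‖x‖ := by
    by_contra hcon
    push_neg at hcon
    have h1 : volume (ball (0 : EuclideanSpace ℝ (Fin n)) ‖x‖)
        ≤ volume (ball (0 : EuclideanSpace ℝ (Fin n)) (rad n R f k)) :=
      measure_mono (ball_subset_ball hcon)
    rw [vol_ball_rad hn] at h1
    exact absurd (h1.trans_lt hk) (lt_irrefl _)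
  have hsub : {t : ℝ | 0 < t ∧ ‖x‖ < rad n R f t} ⊆ Set.Ioc 0 (k : ℝ) := by
    intro t ht
    refine ⟨ht.1, ?_⟩
    by_contra hc
    push_neg at hc
    exact absurd (ht.2.trans_le (rad_anti hc.le)) (not_lt.mpr hradk.le)
  exact ((measure_mono hsub).trans_lt (by simp [Real.volume_Ioc])).ne

lemma lt_schwarz_iff (hn : n ≠ 0) (hf : Measurable f) {x : EuclideanSpace ℝ (Fin n)}
    (hx : x ≠ 0) {s : ℝ} (hs : 0 ≤ s) :
    s < schwarz n (ball (0 : EuclideanSpace ℝ (Fin n)) R) f x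
      ↔ ∃ t, s < t ∧ ‖x‖ < rad n R f t := by
  rw [schwarz_eq]
  constructor
  · intro h
    by_contra hc
    push_neg at hc
    have hsub : {t : ℝ | 0 < t ∧ ‖x‖ < rad n R f t} ⊆ Set.Ioc 0 s := by
      intro t ht
      refine ⟨ht.1, ?_⟩
      by_contra hts
      push_neg at hts
      exact absurd ht.2 (not_lt.mpr (hc t hts))
    have hmono : volume {t : ℝ | 0 < t ∧ ‖x‖ < rad n R f t} ≤ volume (Set.Ioc 0 s) :=
      measure_mono hsub
    rw [Real.volume_Ioc] at hmono
    have h2 := ENNReal.toReal_le_of_le_ofReal (by linarith : (0:ℝ) ≤ s - 0)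
      (by simpa using hmono)
    simp at h2
    linarith
  · rintro ⟨t, hst, hxt⟩
    have hsub : Set.Ioc 0 t ⊆ {t : ℝ | 0 < t ∧ ‖x‖ < rad n R f t} := by
      intro u hu
      exact ⟨hu.1, hxt.trans_le (rad_anti hu.2)⟩
    have h1 : ENNReal.ofReal t ≤ volume {t : ℝ | 0 < t ∧ ‖x‖ < rad n R f t} := by
      have hm : volume (Set.Ioc 0 t) ≤ volume {t : ℝ | 0 < t ∧ ‖x‖ < rad n R f t} :=
        measure_mono hsub
      rwa [Real.volume_Ioc, sub_zero] at hm
    have h2 := ENNReal.toReal_mono (vol_Sx_ne_top hn hf hx) h1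
    rw [ENNReal.toReal_ofReal (hs.trans hst.le)] at h2
    linarith

lemma not_lt_schwarz_of_bound (hn : n ≠ 0) {M : ℝ} (hfM : ∀ y, f y ≤ M)
    (x : EuclideanSpace ℝ (Fin n)) :
    schwarz n (ball (0 : EuclideanSpace ℝ (Fin n)) R) f x ≤ max M 0 := by
  rw [schwarz_eq]
  have hsub : {t : ℝ | 0 < t ∧ ‖x‖ < rad n R f t} ⊆ Set.Ioc 0 (max M 0) := by
    intro t ht
    obtain ⟨ht1, ht2⟩ := ht
    refine ⟨ht1, ?_⟩
    by_contra hc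
    push_neg at hc
    have hlev : lev n R f t = ∅ := by
      ext y
      simp only [lev, Set.mem_setOf_eq, Set.mem_empty_iff_false, iff_false, not_and]
      intro _
      exact not_lt.mpr (((hfM y).trans (le_max_left M 0)).trans hc.le)
    have hr0 : rad n R f t = 0 := by
      rw [rad, hlev]
      simp [ballRad, Real.zero_rpow (inv_ne_zero (Nat.cast_ne_zero.mpr hn))]
    rw [hr0] at ht2
    exact absurd ht2 (not_lt.mpr (norm_nonneg x))
  have h1 : volume {t : ℝ | 0 < t ∧ ‖x‖ < rad n R f t} ≤ volume (Set.Ioc 0 (max M 0)) :=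
    measure_mono hsub
  rw [Real.volume_Ioc, sub_zero] at h1
  exact ENNReal.toReal_le_of_le_ofReal (le_max_right M 0) h1

lemma vol_zero_singleton (hn : n ≠ 0) :
    volume ({0} : Set (EuclideanSpace ℝ (Fin n))) = 0 := by
  haveI := nontriv hn
  exact measure_singleton 0

/-- The union of balls describing the superlevel set of a rearrangement. -/
def U (n : ℕ) (R : ℝ) (f : EuclideanSpace ℝ (Fin n) → ℝ) (s : ℝ) :
    Set (EuclideanSpace ℝ (Fin n)) :=
  ⋃ t ∈ Set.Ioi s, ball (0 : EuclideanSpace ℝ (Fin n)) (rad n R f t)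

lemma U_norm_closed {s : ℝ} {x y : EuclideanSpace ℝ (Fin n)} (hx : x ∈ U n R f s)
    (hyx : ‖y‖ ≤ ‖x‖) : y ∈ U n R f s := by
  simp only [U, Set.mem_iUnion, mem_ball_zero_iff] at hx ⊢
  obtain ⟨t, ht, hxt⟩ := hx
  exact ⟨t, ht, hyx.trans_lt hxt⟩

lemma U_subset (hn : n ≠ 0) (hR : 0 ≤ R) {s : ℝ} :
    U n R f s ⊆ ball (0 : EuclideanSpace ℝ (Fin n)) R := by
  refine Set.iUnion₂_subset fun t _ => ball_subset_ball (rad_le_R hn hR t)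

lemma superlevel_diff (hn : n ≠ 0) (hf : Measurable f) {s : ℝ} (hs : 0 ≤ s) :
    {x : EuclideanSpace ℝ (Fin n)
        | s < schwarz n (ball (0 : EuclideanSpace ℝ (Fin n)) R) f x} \ {0}
      = U n R f s \ {0} := by
  ext x
  simp only [Set.mem_diff, Set.mem_setOf_eq, Set.mem_singleton_iff]
  constructor
  · rintro ⟨hlt, hx0⟩
    obtain ⟨t, hst, hxt⟩ := (lt_schwarz_iff hn hf hx0 hs).mp hlt
    exact ⟨Set.mem_biUnion hst (mem_ball_zero_iff.mpr hxt), hx0⟩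
  · rintro ⟨hU, hx0⟩
    simp only [U, Set.mem_iUnion, mem_ball_zero_iff] at hU
    obtain ⟨t, ht, hxt⟩ := hU
    exact ⟨(lt_schwarz_iff hn hf hx0 hs).mpr ⟨t, ht, hxt⟩, hx0⟩

lemma vol_U (hn : n ≠ 0) (hf : Measurable f) (s : ℝ) :
    volume (U n R f s) = volume (lev n R f s) := by
  have hmono1 : Monotone (fun k : ℕ => ball (0 : EuclideanSpace ℝ (Fin n))
      (rad n R f (s + 1 / (k + 1)))) := by
    intro k m hkm
    refine ball_subset_ball (rad_anti ?_)
    have : (1 : ℝ) / (m + 1) ≤ 1 / (k + 1) := by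
      apply one_div_le_one_div_of_le (by positivity)
      exact_mod_cast Nat.add_le_add_right hkm 1
    linarith
  have hU : U n R f s = ⋃ k : ℕ, ball (0 : EuclideanSpace ℝ (Fin n))
      (rad n R f (s + 1 / (k + 1))) := by
    apply Set.Subset.antisymm
    · refine Set.iUnion₂_subset fun t ht => ?_
      obtain ⟨k, hk⟩ := exists_nat_one_div_lt (sub_pos.mpr ht : (0:ℝ) < t - s)
      refine Set.subset_iUnion_of_subset k (ball_subset_ball (rad_anti ?_))
      have : (1 : ℝ) / (k + 1) ≤ t - s := hk.le
      linarith
    · refine Set.iUnion_subset fun k => ?_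
      refine Set.subset_iUnion₂_of_subset (s + 1 / (k + 1)) ?_ le_rfl
      have : (0:ℝ) < 1 / ((k:ℝ) + 1) := by positivity
      simpa using this
  have hmono2 : Monotone (fun k : ℕ => lev n R f (s + 1 / (k + 1))) := by
    intro k m hkm
    refine lev_anti ?_
    have : (1 : ℝ) / (m + 1) ≤ 1 / (k + 1) := by
      apply one_div_le_one_div_of_le (by positivity)
      exact_mod_cast Nat.add_le_add_right hkm 1
    linarith
  have hlev : (⋃ k : ℕ, lev n R f (s + 1 / (k + 1))) = lev n R f s := by
    apply Set.Subset.antisymm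
    · refine Set.iUnion_subset fun k => lev_anti ?_
      have : (0:ℝ) < 1 / ((k:ℝ) + 1) := by positivity
      linarith
    · intro y hy
      obtain ⟨k, hk⟩ := exists_nat_one_div_lt (sub_pos.mpr hy.2)
      exact Set.mem_iUnion.mpr ⟨k, hy.1, by linarith⟩
  calc volume (U n R f s)
      = ⨆ k : ℕ, volume (ball (0 : EuclideanSpace ℝ (Fin n))
          (rad n R f (s + 1 / (k + 1)))) := by rw [hU, hmono1.measure_iUnion]
    _ = ⨆ k : ℕ, volume (lev n R f (s + 1 / (k + 1))) := by
        congr 1; funext k; exact vol_ball_rad hn _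
    _ = volume (⋃ k : ℕ, lev n R f (s + 1 / (k + 1))) := (hmono2.measure_iUnion).symm
    _ = volume (lev n R f s) := by rw [hlev]

lemma superlevel_inter_diff (hn : n ≠ 0) (hR : 0 ≤ R) (hf : Measurable f) {s : ℝ}
    (hs : 0 ≤ s) :
    ({x : EuclideanSpace ℝ (Fin n)
      | s < schwarz n (ball (0 : EuclideanSpace ℝ (Fin n)) R) f x}
      ∩ ball (0 : EuclideanSpace ℝ (Fin n)) R) \ {0} = U n R f s \ {0} := by
    ext x
    simp only [Set.mem_diff, Set.mem_inter_iff, Set.mem_setOf_eq, Set.mem_singleton_iff]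
    constructor
    · rintro ⟨⟨hlt, _⟩, hx0⟩
      obtain ⟨t, hst, hxt⟩ := (lt_schwarz_iff hn hf hx0 hs).mp hlt
      exact ⟨Set.mem_biUnion hst (mem_ball_zero_iff.mpr hxt), hx0⟩
    · rintro ⟨hU, hx0⟩
      have hxt' := hU
      simp only [U, Set.mem_iUnion, mem_ball_zero_iff] at hxt'
      obtain ⟨t, ht, hxt⟩ := hxt'
      exact ⟨⟨(lt_schwarz_iff hn hf hx0 hs).mpr ⟨t, ht, hxt⟩, U_subset hn hR hU⟩, hx0⟩

lemma vol_superlevel (hn : n ≠ 0) (hR : 0 ≤ R) (hf : Measurable f) {s : ℝ} (hs : 0 ≤ s) :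
    volume ({x : EuclideanSpace ℝ (Fin n)
        | s < schwarz n (ball (0 : EuclideanSpace ℝ (Fin n)) R) f x}
      ∩ ball (0 : EuclideanSpace ℝ (Fin n)) R) = volume (lev n R f s) := by
  have h0 := vol_zero_singleton hn
  have key := superlevel_inter_diff hn hR hf hs
  calc volume ({x : EuclideanSpace ℝ (Fin n)
      | s < schwarz n (ball (0 : EuclideanSpace ℝ (Fin n)) R) f x}
      ∩ ball (0 : EuclideanSpace ℝ (Fin n)) R)
      = volume (({x : EuclideanSpace ℝ (Fin n)
          | s < schwarz n (ball (0 : EuclideanSpace ℝ (Fin n)) R) f x}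
          ∩ ball (0 : EuclideanSpace ℝ (Fin n)) R) \ {0}) :=
        (measure_diff_null h0).symm
    _ = volume (U n R f s \ {0}) := by rw [key]
    _ = volume (U n R f s) := measure_diff_null h0
    _ = volume (lev n R f s) := vol_U hn hf s

lemma schwarz_meas (f : EuclideanSpace ℝ (Fin n) → ℝ) :
    Measurable (schwarz n (ball (0 : EuclideanSpace ℝ (Fin n)) R) f) := by
  have hrad : Measurable (rad n R f) := (rad_anti (f := f)).measurable
  have hset : MeasurableSet {p : (EuclideanSpace ℝ (Fin n)) × ℝ | ‖p.1‖ < rad n R f p.2} :=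
    measurableSet_lt (measurable_norm.comp measurable_fst) (hrad.comp measurable_snd)
  have hsm : StronglyMeasurable fun p : (EuclideanSpace ℝ (Fin n)) × ℝ =>
      ({p : (EuclideanSpace ℝ (Fin n)) × ℝ | ‖p.1‖ < rad n R f p.2}).indicator
        (fun _ => (1 : ℝ)) p :=
    (measurable_const.indicator hset).stronglyMeasurable
  have heq : schwarz n (ball (0 : EuclideanSpace ℝ (Fin n)) R) f = fun x =>
      ∫ t in Set.Ioi (0:ℝ),
        ({p : (EuclideanSpace ℝ (Fin n)) × ℝ | ‖p.1‖ < rad n R f p.2}).indicator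
          (fun _ => (1 : ℝ)) (x, t) := by
    funext x
    unfold schwarz
    refine integral_congr_ae (Filter.Eventually.of_forall fun t => ?_)
    show (schwarzSet n (lev n R f t)).indicator (fun _ => (1 : ℝ)) x = _
    by_cases h : ‖x‖ < rad n R f t
    · rw [Set.indicator_of_mem (mem_schwarzSet.mpr h)]
      exact (Set.indicator_of_mem
        (show ((x, t) : (EuclideanSpace ℝ (Fin n)) × ℝ)
          ∈ {p : (EuclideanSpace ℝ (Fin n)) × ℝ | ‖p.1‖ < rad n R f p.2} from h)
        (fun _ => (1:ℝ))).symm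
    · rw [Set.indicator_of_notMem (fun hc => h (mem_schwarzSet.mp hc))]
      exact (Set.indicator_of_notMem
        (show ((x, t) : (EuclideanSpace ℝ (Fin n)) × ℝ)
          ∉ {p : (EuclideanSpace ℝ (Fin n)) × ℝ | ‖p.1‖ < rad n R f p.2} from h)
        (fun _ => (1:ℝ))).symm
  rw [heq]
  exact hsm.integral_prod_right'.measurable

lemma normClosed_nested {A B : Set (EuclideanSpace ℝ (Fin n))}
    (hA : ∀ ⦃x y⦄, x ∈ A → ‖y‖ ≤ ‖x‖ → y ∈ A)
    (hB : ∀ ⦃x y⦄, x ∈ B → ‖y‖ ≤ ‖x‖ → y ∈ B) : A ⊆ B ∨ B ⊆ A := by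
  by_contra hcon
  push_neg at hcon
  obtain ⟨hAB, hBA⟩ := hcon
  obtain ⟨u, hu, huB⟩ := Set.not_subset.mp hAB
  obtain ⟨v, hv, hvA⟩ := Set.not_subset.mp hBA
  rcases le_total ‖u‖ ‖v‖ with h | h
  · exact huB (hB hv h)
  · exact hvA (hA hu h)

lemma U_nested {g : EuclideanSpace ℝ (Fin n) → ℝ} {a c : ℝ} :
    U n R f a ⊆ U n R g c ∨ U n R g c ⊆ U n R f a :=
  normClosed_nested (fun _ _ hx hyx => U_norm_closed hx hyx)
    (fun _ _ hx hyx => U_norm_closed hx hyx)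

lemma vol_superlevel_inter2 {g : EuclideanSpace ℝ (Fin n) → ℝ} (hn : n ≠ 0) (hR : 0 ≤ R)
    (hf : Measurable f) (hg : Measurable g) {a c : ℝ} (ha : 0 ≤ a) (hc : 0 ≤ c) :
    volume (({x : EuclideanSpace ℝ (Fin n)
        | a < schwarz n (ball (0 : EuclideanSpace ℝ (Fin n)) R) f x}
        ∩ ball (0 : EuclideanSpace ℝ (Fin n)) R)
      ∩ ({x : EuclideanSpace ℝ (Fin n)
        | c < schwarz n (ball (0 : EuclideanSpace ℝ (Fin n)) R) g x}
        ∩ ball (0 : EuclideanSpace ℝ (Fin n)) R))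
      = min (volume (lev n R f a)) (volume (lev n R g c)) := by
  have h0 := vol_zero_singleton hn
  set X1 := {x : EuclideanSpace ℝ (Fin n)
      | a < schwarz n (ball (0 : EuclideanSpace ℝ (Fin n)) R) f x}
      ∩ ball (0 : EuclideanSpace ℝ (Fin n)) R with hX1
  set X2 := {x : EuclideanSpace ℝ (Fin n)
      | c < schwarz n (ball (0 : EuclideanSpace ℝ (Fin n)) R) g x}
      ∩ ball (0 : EuclideanSpace ℝ (Fin n)) R with hX2
  have hsplit : ∀ (A B : Set (EuclideanSpace ℝ (Fin n))),
      (A ∩ B) \ {0} = (A \ {0}) ∩ (B \ {0}) := by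
    intro A B; ext z; simp only [Set.mem_diff, Set.mem_inter_iff]; tauto
  have hd : (X1 ∩ X2) \ {0} = (U n R f a ∩ U n R g c) \ {0} := by
    rw [hsplit, superlevel_inter_diff hn hR hf ha, superlevel_inter_diff hn hR hg hc,
      ← hsplit]
  have hvol : volume (X1 ∩ X2) = volume (U n R f a ∩ U n R g c) := by
    rw [← measure_diff_null (s := X1 ∩ X2) h0, hd, measure_diff_null h0]
  rw [hvol]
  rcases U_nested (f := f) (g := g) (a := a) (c := c) with h | h
  · rw [Set.inter_eq_left.mpr h]
    rw [vol_U hn hf, min_eq_left]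
    rw [← vol_U hn hf, ← vol_U hn hg]
    exact measure_mono h
  · rw [Set.inter_eq_right.mpr h]
    rw [vol_U hn hg, min_eq_right]
    rw [← vol_U hn hf, ← vol_U hn hg]
    exact measure_mono h

lemma sq_level {g : EuclideanSpace ℝ (Fin n) → ℝ} (hg0 : ∀ x, 0 ≤ g x) {t : ℝ}
    (ht : 0 < t) : {x : EuclideanSpace ℝ (Fin n) | t < g x ^ 2}
      = {x : EuclideanSpace ℝ (Fin n) | Real.sqrt t < g x} := by
  ext x
  simp only [Set.mem_setOf_eq]
  rcases (hg0 x).lt_or_eq with h | h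
  · exact (Real.sqrt_lt' h).symm
  · constructor
    · intro hc; rw [← h] at hc; nlinarith
    · intro hc; rw [← h] at hc; exact absurd hc (not_lt.mpr (Real.sqrt_nonneg t))

lemma equi_sq (hn : n ≠ 0) (hR : 0 ≤ R) (hf : Measurable f) (hf0 : ∀ x, 0 ≤ f x) :
    ∫⁻ x in ball (0 : EuclideanSpace ℝ (Fin n)) R,
        ENNReal.ofReal ((schwarz n (ball (0 : EuclideanSpace ℝ (Fin n)) R) f x) ^ 2)
      = ∫⁻ x in ball (0 : EuclideanSpace ℝ (Fin n)) R, ENNReal.ofReal (f x ^ 2) := by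
  have hsm := schwarz_meas (R := R) f
  rw [lintegral_eq_lintegral_meas_lt _
      (Filter.Eventually.of_forall fun x => sq_nonneg _) (hsm.pow_const 2).aemeasurable,
    lintegral_eq_lintegral_meas_lt _
      (Filter.Eventually.of_forall fun x => sq_nonneg _) (hf.pow_const 2).aemeasurable]
  refine setLIntegral_congr_fun measurableSet_Ioi ?_
  intro t ht
  beta_reduce
  have hst : (0:ℝ) ≤ Real.sqrt t := Real.sqrt_nonneg t
  rw [Measure.restrict_apply (measurableSet_lt measurable_const (hsm.pow_const 2)),
    Measure.restrict_apply (measurableSet_lt measurable_const (hf.pow_const 2))]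
  rw [sq_level (fun x => schwarz_nonneg _ f x) ht, sq_level hf0 ht]
  rw [vol_superlevel hn hR hf hst, lev_eq]

lemma hl2 (hn : n ≠ 0) (hR : 0 ≤ R) {φ w : EuclideanSpace ℝ (Fin n) → ℝ}
    (hφ : Measurable φ) (hw : Measurable w) (hw0 : ∀ x, 0 ≤ w x) {a : ℝ} (ha : 0 ≤ a) :
    ∫⁻ x in {x : EuclideanSpace ℝ (Fin n) | a < φ x}
        ∩ ball (0 : EuclideanSpace ℝ (Fin n)) R, ENNReal.ofReal (w x ^ 2)
      ≤ ∫⁻ x in {x : EuclideanSpace ℝ (Fin n)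
          | a < schwarz n (ball (0 : EuclideanSpace ℝ (Fin n)) R) φ x}
        ∩ ball (0 : EuclideanSpace ℝ (Fin n)) R,
          ENNReal.ofReal ((schwarz n (ball (0 : EuclideanSpace ℝ (Fin n)) R) w x) ^ 2) := by
  have hsφ := schwarz_meas (R := R) φ
  have hsw := schwarz_meas (R := R) w
  have hA : MeasurableSet ({x : EuclideanSpace ℝ (Fin n) | a < φ x}
      ∩ ball (0 : EuclideanSpace ℝ (Fin n)) R) :=
    (hφ measurableSet_Ioi).inter measurableSet_ball
  have hAs : MeasurableSet ({x : EuclideanSpace ℝ (Fin n)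
      | a < schwarz n (ball (0 : EuclideanSpace ℝ (Fin n)) R) φ x}
      ∩ ball (0 : EuclideanSpace ℝ (Fin n)) R) :=
    (hsφ measurableSet_Ioi).inter measurableSet_ball
  rw [lintegral_eq_lintegral_meas_lt _
      (Filter.Eventually.of_forall fun x => sq_nonneg _) (hw.pow_const 2).aemeasurable,
    lintegral_eq_lintegral_meas_lt _
      (Filter.Eventually.of_forall fun x => sq_nonneg _) (hsw.pow_const 2).aemeasurable]
  refine lintegral_mono_ae ?_
  filter_upwards [self_mem_ae_restrict (measurableSet_Ioi (a := (0:ℝ)))] with t ht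
  have hst : (0:ℝ) ≤ Real.sqrt t := Real.sqrt_nonneg t
  rw [Measure.restrict_apply (measurableSet_lt measurable_const (hw.pow_const 2)),
    Measure.restrict_apply (measurableSet_lt measurable_const (hsw.pow_const 2))]
  rw [sq_level hw0 ht, sq_level (fun x => schwarz_nonneg _ w x) ht]
  -- RHS set equals the double-superlevel intersection
  have hrhs : {x : EuclideanSpace ℝ (Fin n)
        | Real.sqrt t < schwarz n (ball (0 : EuclideanSpace ℝ (Fin n)) R) w x}
      ∩ ({x : EuclideanSpace ℝ (Fin n)
        | a < schwarz n (ball (0 : EuclideanSpace ℝ (Fin n)) R) φ x}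
        ∩ ball (0 : EuclideanSpace ℝ (Fin n)) R)
      = ({x : EuclideanSpace ℝ (Fin n)
        | a < schwarz n (ball (0 : EuclideanSpace ℝ (Fin n)) R) φ x}
        ∩ ball (0 : EuclideanSpace ℝ (Fin n)) R)
      ∩ ({x : EuclideanSpace ℝ (Fin n)
        | Real.sqrt t < schwarz n (ball (0 : EuclideanSpace ℝ (Fin n)) R) w x}
        ∩ ball (0 : EuclideanSpace ℝ (Fin n)) R) := by
    ext z; simp only [Set.mem_inter_iff, Set.mem_setOf_eq]; tauto
  rw [hrhs, vol_superlevel_inter2 hn hR hφ hw ha hst]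
  refine le_min ?_ ?_
  · rw [lev_eq]
    exact measure_mono (fun z hz => hz.2)
  · rw [lev_eq]
    exact measure_mono (fun z hz => ⟨hz.1, hz.2.2⟩)

lemma levB {β : ℝ} (hs0 : 0 < β) {b : ℝ → ℝ} (hbc : ContinuousOn b (Set.Icc 0 1))
    (hbanti : StrictAntiOn b (Set.Icc 0 1)) (hb0 : b 0 = β) {s : ℝ} (hs : 0 < s) :
    ∃ a : ℝ, 0 ≤ a ∧ ∀ u ∈ Set.Icc (0:ℝ) 1, (s < β - b u ↔ a < u) := by
  have hBmono : MonotoneOn (fun u => β - b u) (Set.Icc (0:ℝ) 1) := by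
    intro u hu v hv huv
    have h := hbanti.antitoneOn hu hv huv
    dsimp only
    linarith
  have hB0 : β - b 0 = 0 := by rw [hb0]; ring
  set T := {u : ℝ | u ∈ Set.Icc (0:ℝ) 1 ∧ s < β - b u} with hT_def
  by_cases hT : T.Nonempty
  · have hbdd : BddBelow T := ⟨0, fun u hu => hu.1.1⟩
    set a := sInf T with ha_def
    have ha0 : 0 ≤ a := le_csInf hT (fun u hu => hu.1.1)
    obtain ⟨u₀, hu₀⟩ := hT
    have ha1 : a ≤ 1 := (csInf_le hbdd hu₀).trans hu₀.1.2
    have haIcc : a ∈ Set.Icc (0:ℝ) 1 := ⟨ha0, ha1⟩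
    have hBa : β - b a ≤ s := by
      by_contra hcon
      push_neg at hcon
      have ha_pos : 0 < a := by
        rcases ha0.lt_or_eq with h | h
        · exact h
        · exfalso; rw [← h] at hcon; rw [hB0] at hcon; exact absurd hcon (not_lt.mpr hs.le)
      have hc : ContinuousWithinAt (fun u => β - b u) (Set.Icc (0:ℝ) 1) a :=
        (continuousOn_const.sub hbc).continuousWithinAt haIcc
      have hev : (fun u => β - b u) ⁻¹' Set.Ioi s ∈ nhdsWithin a (Set.Icc (0:ℝ) 1) :=
        hc (Ioi_mem_nhds hcon)
      have hne : (nhdsWithin a (Set.Ioo 0 a)).NeBot := by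
        apply mem_closure_iff_nhdsWithin_neBot.mp
        rw [closure_Ioo (ne_of_lt ha_pos)]
        exact Set.right_mem_Icc.mpr ha_pos.le
      have hmono' : nhdsWithin a (Set.Ioo 0 a) ≤ nhdsWithin a (Set.Icc (0:ℝ) 1) :=
        nhdsWithin_mono a (fun v hv => ⟨hv.1.le, (hv.2.le.trans ha1)⟩)
      obtain ⟨v, hvB, hvIoo⟩ :=
        Filter.nonempty_of_mem (Filter.inter_mem (hmono' hev) self_mem_nhdsWithin)
      have hva : a ≤ v := csInf_le hbdd ⟨⟨hvIoo.1.le, hvIoo.2.le.trans ha1⟩, hvB⟩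
      exact absurd hvIoo.2 (not_lt.mpr hva)
    refine ⟨a, ha0, fun u hu => ⟨fun h => ?_, fun h => ?_⟩⟩
    · have hau : a ≤ u := csInf_le hbdd ⟨hu, h⟩
      rcases hau.lt_or_eq with h' | h'
      · exact h'
      · exfalso; rw [h'] at hBa; exact absurd h (not_lt.mpr hBa)
    · obtain ⟨v, hvT, hvu⟩ := exists_lt_of_csInf_lt ⟨u₀, hu₀⟩ h
      have h3 := hBmono hvT.1 hu hvu.le
      have h2 := hvT.2
      simp only at h3 h2
      linarith
  · refine ⟨1, zero_le_one, fun u hu => ⟨fun h => ?_, fun h => ?_⟩⟩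
    · exact absurd ⟨hu, h⟩ (fun hc => hT ⟨u, hc⟩)
    · exact absurd h (not_lt.mpr hu.2)

lemma schwarz_mem_Icc (hn : n ≠ 0) {φ : EuclideanSpace ℝ (Fin n) → ℝ}
    (hφ01 : ∀ x, φ x ∈ Set.Icc (0:ℝ) 1) (x : EuclideanSpace ℝ (Fin n)) :
    schwarz n (ball (0 : EuclideanSpace ℝ (Fin n)) R) φ x ∈ Set.Icc (0:ℝ) 1 := by
  refine ⟨schwarz_nonneg _ _ x, ?_⟩
  have := not_lt_schwarz_of_bound (R := R) hn (M := 1) (fun y => (hφ01 y).2) x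
  rwa [max_eq_left zero_le_one] at this

lemma comp_meas {b : ℝ → ℝ} (hbc : ContinuousOn b (Set.Icc 0 1))
    {φ : EuclideanSpace ℝ (Fin n) → ℝ} (hφ : Measurable φ)
    (hφ01 : ∀ x, φ x ∈ Set.Icc (0:ℝ) 1) : Measurable fun x => b (φ x) := by
  have h1 : Measurable fun x => (⟨φ x, hφ01 x⟩ : Set.Icc (0:ℝ) 1) := hφ.subtype_mk
  exact (ContinuousOn.restrict hbc).measurable.comp h1

lemma hl_main (hn : n ≠ 0) (hR : 0 ≤ R) {β : ℝ} (hβ : 0 < β) {b : ℝ → ℝ}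
    (hbc : ContinuousOn b (Set.Icc 0 1)) (hbanti : StrictAntiOn b (Set.Icc 0 1))
    (hb0 : b 0 = β) (hbrange : ∀ s ∈ Set.Icc (0:ℝ) 1, b s ∈ Set.Icc 0 β)
    {φ w : EuclideanSpace ℝ (Fin n) → ℝ} (hφ : Measurable φ)
    (hφ01 : ∀ x, φ x ∈ Set.Icc (0:ℝ) 1) (hw : Measurable w) (hw0 : ∀ x, 0 ≤ w x)
    (hfin : ∫⁻ x in ball (0 : EuclideanSpace ℝ (Fin n)) R,
      ENNReal.ofReal (w x ^ 2) ≠ ⊤) :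
    ∫⁻ x in ball (0 : EuclideanSpace ℝ (Fin n)) R,
        ENNReal.ofReal (β - b (φ x)) * ENNReal.ofReal (w x ^ 2)
      ≤ ∫⁻ x in ball (0 : EuclideanSpace ℝ (Fin n)) R,
        ENNReal.ofReal (β - b (schwarz n (ball (0 : EuclideanSpace ℝ (Fin n)) R) φ x))
          * ENNReal.ofReal
            ((schwarz n (ball (0 : EuclideanSpace ℝ (Fin n)) R) w x) ^ 2) := by
  have hφs01 := schwarz_mem_Icc (R := R) hn hφ01
  have hsφ := schwarz_meas (R := R) φ
  have hsw := schwarz_meas (R := R) w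
  have hbφ : Measurable fun x => b (φ x) := comp_meas hbc hφ hφ01
  have hbφs : Measurable fun x =>
      b (schwarz n (ball (0 : EuclideanSpace ℝ (Fin n)) R) φ x) :=
    comp_meas hbc hsφ hφs01
  have hB : Measurable fun x => ENNReal.ofReal (β - b (φ x)) :=
    (measurable_const.sub hbφ).ennreal_ofReal
  have hBs : Measurable fun x => ENNReal.ofReal
      (β - b (schwarz n (ball (0 : EuclideanSpace ℝ (Fin n)) R) φ x)) :=
    (measurable_const.sub hbφs).ennreal_ofReal
  have hW : Measurable fun x => ENNReal.ofReal (w x ^ 2) :=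
    (hw.pow_const 2).ennreal_ofReal
  have hWs : Measurable fun x => ENNReal.ofReal
      ((schwarz n (ball (0 : EuclideanSpace ℝ (Fin n)) R) w x) ^ 2) :=
    (hsw.pow_const 2).ennreal_ofReal
  set ν1 := (volume.restrict (ball (0 : EuclideanSpace ℝ (Fin n)) R)).withDensity
    (fun x => ENNReal.ofReal (w x ^ 2)) with hν1_def
  set ν2 := (volume.restrict (ball (0 : EuclideanSpace ℝ (Fin n)) R)).withDensity
    (fun x => ENNReal.ofReal
      ((schwarz n (ball (0 : EuclideanSpace ℝ (Fin n)) R) w x) ^ 2)) with hν2_def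
  have hfin2 : ∫⁻ x in ball (0 : EuclideanSpace ℝ (Fin n)) R,
      ENNReal.ofReal ((schwarz n (ball (0 : EuclideanSpace ℝ (Fin n)) R) w x) ^ 2) ≠ ⊤ := by
    rw [equi_sq hn hR hw hw0]; exact hfin
  haveI : IsFiniteMeasure ν1 := by
    constructor
    rw [hν1_def, withDensity_apply _ MeasurableSet.univ, Measure.restrict_univ]
    exact lt_top_iff_ne_top.mpr hfin
  haveI : IsFiniteMeasure ν2 := by
    constructor
    rw [hν2_def, withDensity_apply _ MeasurableSet.univ, Measure.restrict_univ]
    exact lt_top_iff_ne_top.mpr hfin2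
  have hnn1 : 0 ≤ᵐ[ν1] fun x => β - b (φ x) :=
    Filter.Eventually.of_forall fun x => sub_nonneg.mpr (hbrange _ (hφ01 x)).2
  have hnn2 : 0 ≤ᵐ[ν2] fun x =>
      β - b (schwarz n (ball (0 : EuclideanSpace ℝ (Fin n)) R) φ x) :=
    Filter.Eventually.of_forall fun x => sub_nonneg.mpr (hbrange _ (hφs01 x)).2
  calc ∫⁻ x in ball (0 : EuclideanSpace ℝ (Fin n)) R,
        ENNReal.ofReal (β - b (φ x)) * ENNReal.ofReal (w x ^ 2)
      = ∫⁻ x, ENNReal.ofReal (β - b (φ x)) ∂ν1 := by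
        rw [hν1_def, lintegral_withDensity_eq_lintegral_mul _ hW hB]
        exact lintegral_congr fun x => by simp [Pi.mul_apply, mul_comm]
    _ = ∫⁻ s in Set.Ioi (0:ℝ), ν1 {x | s < β - b (φ x)} :=
        lintegral_eq_lintegral_meas_lt ν1 hnn1 (measurable_const.sub hbφ).aemeasurable
    _ ≤ ∫⁻ s in Set.Ioi (0:ℝ), ν2 {x | s < β
        - b (schwarz n (ball (0 : EuclideanSpace ℝ (Fin n)) R) φ x)} := by
        refine lintegral_mono_ae ?_
        filter_upwards [self_mem_ae_restrict (measurableSet_Ioi (a := (0:ℝ)))] with s hs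
        obtain ⟨a, ha0, hiff⟩ := levB hβ hbc hbanti hb0 hs
        have hset1 : {x : EuclideanSpace ℝ (Fin n) | s < β - b (φ x)}
            = {x : EuclideanSpace ℝ (Fin n) | a < φ x} := by
          ext x; exact hiff (φ x) (hφ01 x)
        have hset2 : {x : EuclideanSpace ℝ (Fin n) | s < β
              - b (schwarz n (ball (0 : EuclideanSpace ℝ (Fin n)) R) φ x)}
            = {x : EuclideanSpace ℝ (Fin n)
              | a < schwarz n (ball (0 : EuclideanSpace ℝ (Fin n)) R) φ x} := by
          ext x; exact hiff _ (hφs01 x)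
        rw [hset1, hset2, hν1_def, hν2_def,
          withDensity_apply _ (measurableSet_lt measurable_const hφ),
          withDensity_apply _ (measurableSet_lt measurable_const hsφ),
          Measure.restrict_restrict (measurableSet_lt measurable_const hφ),
          Measure.restrict_restrict (measurableSet_lt measurable_const hsφ)]
        exact hl2 hn hR hφ hw hw0 ha0
    _ = ∫⁻ x, ENNReal.ofReal (β
        - b (schwarz n (ball (0 : EuclideanSpace ℝ (Fin n)) R) φ x)) ∂ν2 :=
        (lintegral_eq_lintegral_meas_lt ν2 hnn2
          (measurable_const.sub hbφs).aemeasurable).symm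
    _ = ∫⁻ x in ball (0 : EuclideanSpace ℝ (Fin n)) R,
        ENNReal.ofReal (β - b (schwarz n (ball (0 : EuclideanSpace ℝ (Fin n)) R) φ x))
          * ENNReal.ofReal
            ((schwarz n (ball (0 : EuclideanSpace ℝ (Fin n)) R) w x) ^ 2) := by
        rw [hν2_def, lintegral_withDensity_eq_lintegral_mul _ hWs hBs]
        exact lintegral_congr fun x => by simp [Pi.mul_apply, mul_comm]

end FK

open FK in
/-- rearrangement decreases the penalized quadratic form:
`∫_Ω b(φ*)(w*)² dx ≤ ∫_Ω b(φ) w² dx` for `b : [0,1] → [0,β]` continuous strictly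
decreasing with `b(0) = β`, `φ : Ω → [0,1]` measurable and `w ≥ 0` in `L²(Ω)`. -/
theorem faber_krahn_stmt9 (n : ℕ) (R β : ℝ) (hR : 0 < R) (hβ : 0 < β)
    (b : ℝ → ℝ) (hbc : ContinuousOn b (Set.Icc 0 1)) (hbanti : StrictAntiOn b (Set.Icc 0 1))
    (hb0 : b 0 = β) (hbrange : ∀ s ∈ Set.Icc (0 : ℝ) 1, b s ∈ Set.Icc 0 β)
    (φ w : EuclideanSpace ℝ (Fin n) → ℝ)
    (hφ : Measurable φ) (hφ01 : ∀ x, φ x ∈ Set.Icc (0 : ℝ) 1)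
    (hw : Measurable w) (hw0 : ∀ x, 0 ≤ w x)
    (hwL2 : IntegrableOn (fun x => w x ^ 2)
      (ball (0 : EuclideanSpace ℝ (Fin n)) R) volume) :
    ∫ x in ball (0 : EuclideanSpace ℝ (Fin n)) R,
        b (schwarz n (ball (0 : EuclideanSpace ℝ (Fin n)) R) φ x)
          * (schwarz n (ball (0 : EuclideanSpace ℝ (Fin n)) R) w x) ^ 2
      ≤ ∫ x in ball (0 : EuclideanSpace ℝ (Fin n)) R, b (φ x) * w x ^ 2 := by
  by_cases hn : n = 0
  · -- degenerate case: the whole space is a point and `schwarz` vanishes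
    subst hn
    have hzero : ∀ (f : EuclideanSpace ℝ (Fin 0) → ℝ) (x : EuclideanSpace ℝ (Fin 0)),
        schwarz 0 (ball (0 : EuclideanSpace ℝ (Fin 0)) R) f x = 0 := by
      intro f x
      have hx0 : ‖x‖ = 0 := by
        simp [EuclideanSpace.norm_eq]
      have hone : ∀ t : ℝ,
          (schwarzSet 0 {y ∈ ball (0 : EuclideanSpace ℝ (Fin 0)) R | t < f y}).indicator
            (fun _ => (1 : ℝ)) x = 1 := by
        intro t
        rw [Set.indicator_of_mem]
        rw [mem_schwarzSet, hx0, ballRad]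
        norm_num
      unfold schwarz
      rw [integral_congr_ae (Filter.Eventually.of_forall hone)]
      simp [Real.volume_Ioi, Measure.real]
    have hLHS : ∫ x in ball (0 : EuclideanSpace ℝ (Fin 0)) R,
        b (schwarz 0 (ball (0 : EuclideanSpace ℝ (Fin 0)) R) φ x)
          * (schwarz 0 (ball (0 : EuclideanSpace ℝ (Fin 0)) R) w x) ^ 2 = 0 := by
      have : ∀ x : EuclideanSpace ℝ (Fin 0),
          b (schwarz 0 (ball (0 : EuclideanSpace ℝ (Fin 0)) R) φ x)
            * (schwarz 0 (ball (0 : EuclideanSpace ℝ (Fin 0)) R) w x) ^ 2 = 0 := by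
        intro x; rw [hzero w x]; ring
      rw [integral_congr_ae (Filter.Eventually.of_forall this)]
      simp
    rw [hLHS]
    exact setIntegral_nonneg measurableSet_ball fun x _ =>
      mul_nonneg (hbrange _ (hφ01 x)).1 (sq_nonneg _)
  · have hR0 : (0:ℝ) ≤ R := hR.le
    have hφs01 := schwarz_mem_Icc (R := R) hn hφ01
    have hsφ := schwarz_meas (R := R) φ
    have hsw := schwarz_meas (R := R) w
    have hbφ : Measurable fun x => b (φ x) := comp_meas hbc hφ hφ01
    have hbφs : Measurable fun x =>
        b (schwarz n (ball (0 : EuclideanSpace ℝ (Fin n)) R) φ x) :=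
      comp_meas hbc hsφ hφs01
    have hW : Measurable fun x => ENNReal.ofReal (w x ^ 2) :=
      (hw.pow_const 2).ennreal_ofReal
    have hWs : Measurable fun x => ENNReal.ofReal
        ((schwarz n (ball (0 : EuclideanSpace ℝ (Fin n)) R) w x) ^ 2) :=
      (hsw.pow_const 2).ennreal_ofReal
    have hfin : ∫⁻ x in ball (0 : EuclideanSpace ℝ (Fin n)) R,
        ENNReal.ofReal (w x ^ 2) ≠ ⊤ := by
      have h := hwL2.2
      rw [HasFiniteIntegral] at h
      refine ne_of_lt (lt_of_eq_of_lt ?_ h)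
      exact lintegral_congr fun x => (Real.enorm_eq_ofReal (sq_nonneg _)).symm
    have hmain := hl_main hn hR0 hβ hbc hbanti hb0 hbrange hφ hφ01 hw hw0 hfin
    have hequi := equi_sq hn hR0 hw hw0
    have hCfin : ENNReal.ofReal β
        * ∫⁻ x in ball (0 : EuclideanSpace ℝ (Fin n)) R, ENNReal.ofReal (w x ^ 2) ≠ ⊤ :=
      ENNReal.mul_ne_top ENNReal.ofReal_ne_top hfin
    -- decomposition of both lintegrals
    have hdecomp : ∀ (u : ℝ), u ∈ Set.Icc (0:ℝ) 1 → ∀ (W : ENNReal), W ≠ ⊤ →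
        ENNReal.ofReal (b u) * W = ENNReal.ofReal β * W - ENNReal.ofReal (β - b u) * W := by
      intro u hu W hWt
      have h1 : ENNReal.ofReal (b u) = ENNReal.ofReal β - ENNReal.ofReal (β - b u) := by
        have h2 := ENNReal.ofReal_sub β (sub_nonneg.mpr (hbrange u hu).2)
        rw [show β - (β - b u) = b u by ring] at h2
        exact h2
      rw [h1, ENNReal.sub_mul (fun _ _ => hWt)]
    have hGfin : ∫⁻ x in ball (0 : EuclideanSpace ℝ (Fin n)) R,
        ENNReal.ofReal (β - b (φ x)) * ENNReal.ofReal (w x ^ 2) ≠ ⊤ := by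
      refine ne_top_of_le_ne_top hCfin ?_
      rw [← lintegral_const_mul _ hW]
      refine lintegral_mono fun x => mul_le_mul_left (ENNReal.ofReal_le_ofReal ?_) _
      have := (hbrange _ (hφ01 x)).1; linarith
    have hGsfin : ∫⁻ x in ball (0 : EuclideanSpace ℝ (Fin n)) R,
        ENNReal.ofReal (β - b (schwarz n (ball (0 : EuclideanSpace ℝ (Fin n)) R) φ x))
          * ENNReal.ofReal ((schwarz n (ball (0 : EuclideanSpace ℝ (Fin n)) R) w x) ^ 2)
        ≠ ⊤ := by
      have hWsfin : ∫⁻ x in ball (0 : EuclideanSpace ℝ (Fin n)) R,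
          ENNReal.ofReal ((schwarz n (ball (0 : EuclideanSpace ℝ (Fin n)) R) w x) ^ 2) ≠ ⊤ := by
        rw [hequi]; exact hfin
      refine ne_top_of_le_ne_top
        (b := ENNReal.ofReal β * ∫⁻ x in ball (0 : EuclideanSpace ℝ (Fin n)) R,
          ENNReal.ofReal ((schwarz n (ball (0 : EuclideanSpace ℝ (Fin n)) R) w x) ^ 2))
        (ENNReal.mul_ne_top ENNReal.ofReal_ne_top hWsfin) ?_
      rw [← lintegral_const_mul _ hWs]
      refine lintegral_mono fun x => mul_le_mul_left (ENNReal.ofReal_le_ofReal ?_) _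
      have := (hbrange _ (hφs01 x)).1; linarith
    have hL_R : ∫⁻ x in ball (0 : EuclideanSpace ℝ (Fin n)) R,
        ENNReal.ofReal (b (φ x) * w x ^ 2)
        = ENNReal.ofReal β
            * (∫⁻ x in ball (0 : EuclideanSpace ℝ (Fin n)) R, ENNReal.ofReal (w x ^ 2))
          - ∫⁻ x in ball (0 : EuclideanSpace ℝ (Fin n)) R,
              ENNReal.ofReal (β - b (φ x)) * ENNReal.ofReal (w x ^ 2) := by
      have hpt : ∀ x, ENNReal.ofReal (b (φ x) * w x ^ 2)
          = ENNReal.ofReal β * ENNReal.ofReal (w x ^ 2)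
            - ENNReal.ofReal (β - b (φ x)) * ENNReal.ofReal (w x ^ 2) := fun x => by
        rw [ENNReal.ofReal_mul (hbrange _ (hφ01 x)).1,
          hdecomp (φ x) (hφ01 x) _ ENNReal.ofReal_ne_top]
      rw [lintegral_congr hpt,
        lintegral_sub (g := fun x => ENNReal.ofReal (β - b (φ x)) * ENNReal.ofReal (w x ^ 2))
          (((measurable_const.sub hbφ).ennreal_ofReal).mul hW) hGfin
          (Filter.Eventually.of_forall fun x => ?_),
        lintegral_const_mul _ hW]
      refine mul_le_mul_left (ENNReal.ofReal_le_ofReal ?_) _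
      have := (hbrange _ (hφ01 x)).1; linarith
    have hL_L : ∫⁻ x in ball (0 : EuclideanSpace ℝ (Fin n)) R,
        ENNReal.ofReal (b (schwarz n (ball (0 : EuclideanSpace ℝ (Fin n)) R) φ x)
          * (schwarz n (ball (0 : EuclideanSpace ℝ (Fin n)) R) w x) ^ 2)
        = ENNReal.ofReal β
            * (∫⁻ x in ball (0 : EuclideanSpace ℝ (Fin n)) R, ENNReal.ofReal (w x ^ 2))
          - ∫⁻ x in ball (0 : EuclideanSpace ℝ (Fin n)) R,
              ENNReal.ofReal (β - b (schwarz n (ball (0 : EuclideanSpace ℝ (Fin n)) R) φ x))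
                * ENNReal.ofReal
                  ((schwarz n (ball (0 : EuclideanSpace ℝ (Fin n)) R) w x) ^ 2) := by
      have hpt : ∀ x, ENNReal.ofReal (b (schwarz n (ball (0 : EuclideanSpace ℝ (Fin n)) R) φ x)
            * (schwarz n (ball (0 : EuclideanSpace ℝ (Fin n)) R) w x) ^ 2)
          = ENNReal.ofReal β
              * ENNReal.ofReal ((schwarz n (ball (0 : EuclideanSpace ℝ (Fin n)) R) w x) ^ 2)
            - ENNReal.ofReal (β - b (schwarz n (ball (0 : EuclideanSpace ℝ (Fin n)) R) φ x))
                * ENNReal.ofReal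
                  ((schwarz n (ball (0 : EuclideanSpace ℝ (Fin n)) R) w x) ^ 2) := fun x => by
        rw [ENNReal.ofReal_mul (hbrange _ (hφs01 x)).1,
          hdecomp _ (hφs01 x) _ ENNReal.ofReal_ne_top]
      rw [lintegral_congr hpt,
        lintegral_sub (g := fun x => ENNReal.ofReal (β - b (schwarz n (ball (0 : EuclideanSpace ℝ (Fin n)) R) φ x))
            * ENNReal.ofReal ((schwarz n (ball (0 : EuclideanSpace ℝ (Fin n)) R) w x) ^ 2))
          (((measurable_const.sub hbφs).ennreal_ofReal).mul hWs) hGsfin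
          (Filter.Eventually.of_forall fun x => ?_),
        lintegral_const_mul _ hWs, hequi]
      refine mul_le_mul_left (ENNReal.ofReal_le_ofReal ?_) _
      have := (hbrange _ (hφs01 x)).1; linarith
    have hle : ∫⁻ x in ball (0 : EuclideanSpace ℝ (Fin n)) R,
        ENNReal.ofReal (b (schwarz n (ball (0 : EuclideanSpace ℝ (Fin n)) R) φ x)
          * (schwarz n (ball (0 : EuclideanSpace ℝ (Fin n)) R) w x) ^ 2)
        ≤ ∫⁻ x in ball (0 : EuclideanSpace ℝ (Fin n)) R,
          ENNReal.ofReal (b (φ x) * w x ^ 2) := by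
      rw [hL_L, hL_R]
      exact tsub_le_tsub_left hmain _
    have hRfin : ∫⁻ x in ball (0 : EuclideanSpace ℝ (Fin n)) R,
        ENNReal.ofReal (b (φ x) * w x ^ 2) ≠ ⊤ := by
      rw [hL_R]
      exact ne_top_of_le_ne_top hCfin tsub_le_self
    rw [integral_eq_lintegral_of_nonneg_ae
        (Filter.Eventually.of_forall fun x =>
          mul_nonneg (hbrange _ (hφs01 x)).1 (sq_nonneg _))
        ((hbφs.mul (hsw.pow_const 2)).aestronglyMeasurable),
      integral_eq_lintegral_of_nonneg_ae
        (Filter.Eventually.of_forall fun x =>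
          mul_nonneg (hbrange _ (hφ01 x)).1 (sq_nonneg _))
        ((hbφ.mul (hw.pow_const 2)).aestronglyMeasurable)]
    exact ENNReal.toReal_mono hRfin hle
end

section
/- (Radially symmetric-decreasing eigenfunction must be strictly decreasing.) Let Ω = B_R(0) ⊂ ℝⁿ, and let w ∈ H¹₀(Ω) ∩ H²(Ω) satisfy w > 0 everywhere in Ω, w radially symmetric and nonincreasing in |x|, and −Δw + V w = λ w a.e. in Ω, where λ ∈ ℝ and V : Ω → [0,∞) is radially nondecreasing (defined everywhere). If w is constant (= c > 0) on an annulus {s ≤ |x| ≤ t} with 0 ≤ s < t ≤ R, then w is constant (= c) on the whole annulus {s < |x| < R}, contradicting the zero boundary trace; hence w is strictly decreasing in |x|. -/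
open MeasureTheory Metric

set_option maxHeartbeats 1600000 in
/-- a positive, radially symmetric and nonincreasing eigenfunction
`w ∈ H¹₀(Ω) ∩ H²(Ω)` (here encoded as continuous on `ℝⁿ`, `C²` in `Ω = B_R(0)`, vanishing
outside `Ω`) of `−Δw + V w = λ w` with `V ≥ 0` radially nondecreasing must be *strictly*
radially decreasing: if it were constant on some annulus, the strong maximum principle
would force it to be a positive constant up to the boundary, contradicting the zero
boundary values. -/
theorem faber_krahn_stmt12 (n : ℕ) (R lam : ℝ) (hR : 0 < R)
    (w V : EuclideanSpace ℝ (Fin n) → ℝ)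
    (hwcont : Continuous w)
    (hw2 : ∀ x ∈ ball (0 : EuclideanSpace ℝ (Fin n)) R, ContDiffAt ℝ 2 w x)
    (hwzero : ∀ x ∉ ball (0 : EuclideanSpace ℝ (Fin n)) R, w x = 0)
    (hwpos : ∀ x ∈ ball (0 : EuclideanSpace ℝ (Fin n)) R, 0 < w x)
    (hwrad : ∀ x y : EuclideanSpace ℝ (Fin n), ‖x‖ ≤ ‖y‖ → w y ≤ w x)
    (hV0 : ∀ x, 0 ≤ V x)
    (hVrad : ∀ x y : EuclideanSpace ℝ (Fin n), ‖x‖ ≤ ‖y‖ → V x ≤ V y)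
    (heq : ∀ᵐ x ∂(volume.restrict (ball (0 : EuclideanSpace ℝ (Fin n)) R)),
      -(∑ i : Fin n, fderiv ℝ (fun y => fderiv ℝ w y (EuclideanSpace.single i 1)) x
          (EuclideanSpace.single i 1)) + V x * w x = lam * w x) :
    ∀ x ∈ ball (0 : EuclideanSpace ℝ (Fin n)) R,
      ∀ y ∈ ball (0 : EuclideanSpace ℝ (Fin n)) R, ‖x‖ < ‖y‖ → w y < w x := by
  intro x hx y hy hxy
  by_contra hlt
  push_neg at hlt
  -- w y = w x =: c
  have hyx : w y = w x := le_antisymm (hwrad x y hxy.le) hlt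
  have hc : 0 < w x := hwpos x hx
  have hs0 : 0 ≤ ‖x‖ := norm_nonneg x
  have htR : ‖y‖ < R := mem_ball_zero_iff.mp hy
  -- n positive
  have hn : 0 < n := by
    rcases Nat.eq_zero_or_pos n with h0 | h; swap; · exact h
    subst h0
    have : ‖y‖ = 0 := by rw [EuclideanSpace.norm_eq]; simp
    have := norm_nonneg x
    linarith
  have hball : ∀ z : EuclideanSpace ℝ (Fin n), ‖z‖ < R → z ∈ ball (0 : EuclideanSpace ℝ (Fin n)) R :=
    fun z hz => mem_ball_zero_iff.mpr hz
  -- w constant on closed annulus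
  have hconst : ∀ z : EuclideanSpace ℝ (Fin n), ‖x‖ ≤ ‖z‖ → ‖z‖ ≤ ‖y‖ → w z = w x := by
    intro z h1 h2
    refine le_antisymm (hwrad x z h1) ?_
    rw [← hyx]
    exact hwrad z y h2
  set i0 : Fin n := ⟨0, hn⟩ with hi0_def
  set Lap : EuclideanSpace ℝ (Fin n) → ℝ := fun z => ∑ i : Fin n,
      fderiv ℝ (fun y => fderiv ℝ w y (EuclideanSpace.single i 1)) z
        (EuclideanSpace.single i 1) with hLap_def
  -- C¹ of fderiv w on ball
  have hCF : ∀ z ∈ ball (0 : EuclideanSpace ℝ (Fin n)) R, ContDiffAt ℝ 1 (fderiv ℝ w) z := by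
    intro z hz
    exact (hw2 z hz).fderiv_right (m := 1) (by norm_num)
  have hDF : ∀ z ∈ ball (0 : EuclideanSpace ℝ (Fin n)) R, DifferentiableAt ℝ (fderiv ℝ w) z :=
    fun z hz => (hCF z hz).differentiableAt one_ne_zero
  -- Lap expressed via second fderiv
  have hterm : ∀ z ∈ ball (0 : EuclideanSpace ℝ (Fin n)) R, ∀ i : Fin n,
      fderiv ℝ (fun y => fderiv ℝ w y (EuclideanSpace.single i 1)) z
        (EuclideanSpace.single i 1)
      = fderiv ℝ (fderiv ℝ w) z (EuclideanSpace.single i 1) (EuclideanSpace.single i 1) := by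
    intro z hz i
    have h1 : HasFDerivAt (fun u => fderiv ℝ w u (EuclideanSpace.single i (1:ℝ)))
        (((fderiv ℝ w z).comp (0 : EuclideanSpace ℝ (Fin n) →L[ℝ] EuclideanSpace ℝ (Fin n)))
          + (fderiv ℝ (fderiv ℝ w) z).flip (EuclideanSpace.single i 1)) z :=
      (hDF z hz).hasFDerivAt.clm_apply (hasFDerivAt_const (EuclideanSpace.single i (1:ℝ)) z)
    rw [h1.fderiv]
    simp
  have hLap_eq : ∀ z ∈ ball (0 : EuclideanSpace ℝ (Fin n)) R, Lap z =
      ∑ i : Fin n, fderiv ℝ (fderiv ℝ w) z (EuclideanSpace.single i 1)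
        (EuclideanSpace.single i 1) := by
    intro z hz
    simp only [hLap_def]
    exact Finset.sum_congr rfl fun i _ => hterm z hz i
  -- a.e. existence helper
  have hexists : ∀ U : Set (EuclideanSpace ℝ (Fin n)), IsOpen U → U.Nonempty →
      U ⊆ ball (0 : EuclideanSpace ℝ (Fin n)) R →
      ∃ z ∈ U, -(Lap z) + V z * w z = lam * w z := by
    intro U hUo hUne hUb
    rw [ae_restrict_iff' measurableSet_ball] at heq
    by_contra h
    push_neg at h
    simp only [hLap_def] at h
    have hsub : U ⊆ {z : EuclideanSpace ℝ (Fin n) |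
        ¬ (z ∈ ball (0 : EuclideanSpace ℝ (Fin n)) R →
        -(∑ i : Fin n, fderiv ℝ (fun y => fderiv ℝ w y (EuclideanSpace.single i 1)) z
          (EuclideanSpace.single i 1)) + V z * w z = lam * w z)} := by
      intro z hz
      simp only [Set.mem_setOf_eq]
      intro hcontra
      exact h z hz (hcontra (hUb hz))
    have h0 : volume {z : EuclideanSpace ℝ (Fin n) |
        ¬ (z ∈ ball (0 : EuclideanSpace ℝ (Fin n)) R →
        -(∑ i : Fin n, fderiv ℝ (fun y => fderiv ℝ w y (EuclideanSpace.single i 1)) z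
          (EuclideanSpace.single i 1)) + V z * w z = lam * w z)} = 0 := by
      rw [← MeasureTheory.ae_iff]
      exact heq
    have := measure_mono_null hsub h0
    exact absurd this (hUo.measure_pos volume hUne).ne'
  -- Lap = 0 on open annulus ‖x‖ < ‖z‖ < ‖y‖
  have hOopen : IsOpen {z : EuclideanSpace ℝ (Fin n) | ‖x‖ < ‖z‖ ∧ ‖z‖ < ‖y‖} :=
    (isOpen_lt continuous_const continuous_norm).inter (isOpen_lt continuous_norm continuous_const)
  have hLapO : ∀ z : EuclideanSpace ℝ (Fin n), ‖x‖ < ‖z‖ → ‖z‖ < ‖y‖ → Lap z = 0 := by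
    intro z h1 h2
    have hmem : {z : EuclideanSpace ℝ (Fin n) | ‖x‖ < ‖z‖ ∧ ‖z‖ < ‖y‖} ∈ nhds z :=
      hOopen.mem_nhds ⟨h1, h2⟩
    have hf0 : ∀ u : EuclideanSpace ℝ (Fin n), ‖x‖ < ‖u‖ → ‖u‖ < ‖y‖ → fderiv ℝ w u = 0 := by
      intro u hu1 hu2
      have hev : ∀ᶠ v in nhds u, w v = w x := by
        filter_upwards [hOopen.mem_nhds ⟨hu1, hu2⟩] with v hv
        exact hconst v hv.1.le hv.2.le
      have hwev : w =ᶠ[nhds u] (fun _ => w x) := hev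
      rw [hwev.fderiv_eq, fderiv_const_apply]
    simp only [hLap_def]
    apply Finset.sum_eq_zero
    intro i _
    have hev : (fun u => fderiv ℝ w u (EuclideanSpace.single i (1:ℝ))) =ᶠ[nhds z]
        (fun _ => (0 : ℝ)) := by
      filter_upwards [hmem] with u hu
      rw [hf0 u hu.1 hu.2]
      rfl
    rw [Filter.EventuallyEq.fderiv_eq hev, fderiv_const_apply]
    rfl
  -- find z₀ in annulus with V z₀ = lam
  obtain ⟨z₀, hz₀mem, hz₀eq⟩ : ∃ z ∈ {z : EuclideanSpace ℝ (Fin n) | ‖x‖ < ‖z‖ ∧ ‖z‖ < ‖y‖},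
      -(Lap z) + V z * w z = lam * w z := by
    apply hexists _ hOopen
    · refine ⟨((‖x‖+‖y‖)/2) • EuclideanSpace.single i0 (1:ℝ), ?_⟩
      have hnorm : ‖((‖x‖+‖y‖)/2) • EuclideanSpace.single i0 (1:ℝ)‖ = (‖x‖+‖y‖)/2 := by
        rw [norm_smul, EuclideanSpace.norm_single, norm_one, mul_one,
          Real.norm_eq_abs, abs_of_nonneg (by linarith)]
      constructor <;> rw [hnorm] <;> linarith
    · intro z hz
      exact hball z (lt_trans hz.2 htR)
  have hVz₀ : V z₀ = lam := by
    have h1 : Lap z₀ = 0 := hLapO z₀ hz₀mem.1 hz₀mem.2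
    have h2 : w z₀ = w x := hconst z₀ hz₀mem.1.le hz₀mem.2.le
    rw [h1, h2] at hz₀eq
    have : V z₀ * w x = lam * w x := by linarith
    exact mul_right_cancel₀ hc.ne' this
  have hr₀s : ‖x‖ < ‖z₀‖ := hz₀mem.1
  have hr₀t : ‖z₀‖ < ‖y‖ := hz₀mem.2
  have hr₀pos : 0 < ‖z₀‖ := lt_of_le_of_lt hs0 hr₀s
  have hVlam : ∀ z : EuclideanSpace ℝ (Fin n), ‖z₀‖ ≤ ‖z‖ → lam ≤ V z := by
    intro z hz
    rw [← hVz₀]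
    exact hVrad z₀ z hz
  -- continuity of Lap on ball
  have hw2on : ContDiffOn ℝ 2 w (ball (0 : EuclideanSpace ℝ (Fin n)) R) :=
    fun z hz => (hw2 z hz).contDiffWithinAt
  have hF1 : ContDiffOn ℝ 1 (fderiv ℝ w) (ball (0 : EuclideanSpace ℝ (Fin n)) R) :=
    hw2on.fderiv_of_isOpen isOpen_ball (by norm_num)
  have hLapcont : ContinuousOn Lap (ball (0 : EuclideanSpace ℝ (Fin n)) R) := by
    simp only [hLap_def]
    apply continuousOn_finset_sum
    intro i _
    have h1 : ContDiffOn ℝ 1 (fun u => fderiv ℝ w u (EuclideanSpace.single i (1:ℝ)))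
        (ball (0 : EuclideanSpace ℝ (Fin n)) R) := hF1.clm_apply contDiffOn_const
    have h2 : ContDiffOn ℝ 0
        (fderiv ℝ (fun u => fderiv ℝ w u (EuclideanSpace.single i (1:ℝ))))
        (ball (0 : EuclideanSpace ℝ (Fin n)) R) :=
      h1.fderiv_of_isOpen isOpen_ball (by norm_num)
    exact (h2.continuousOn).clm_apply continuousOn_const
  -- Lap nonneg on outer annulus
  have hLap_nonneg : ∀ z ∈ ball (0 : EuclideanSpace ℝ (Fin n)) R, ‖z₀‖ < ‖z‖ → 0 ≤ Lap z := by
    intro z hz hrz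
    by_contra hneg
    push_neg at hneg
    set U := (ball (0 : EuclideanSpace ℝ (Fin n)) R ∩ Lap ⁻¹' (Set.Iio 0))
        ∩ {u : EuclideanSpace ℝ (Fin n) | ‖z₀‖ < ‖u‖} with hU_def
    have hUo : IsOpen U :=
      (hLapcont.isOpen_inter_preimage isOpen_ball isOpen_Iio).inter
        (isOpen_lt continuous_const continuous_norm)
    have hUne : U.Nonempty := ⟨z, ⟨⟨hz, hneg⟩, hrz⟩⟩
    have hUb : U ⊆ ball (0 : EuclideanSpace ℝ (Fin n)) R := fun u hu => hu.1.1
    obtain ⟨u, huU, hueq⟩ := hexists U hUo hUne hUb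
    have h1 : Lap u < 0 := huU.1.2
    have h2 : lam ≤ V u := hVlam u huU.2.le
    have h3 : 0 < w u := hwpos u huU.1.1
    nlinarith
  -- radial function g
  set p : ℝ → EuclideanSpace ℝ (Fin n) := fun r => r • EuclideanSpace.single i0 (1:ℝ) with hp_def
  have hpnorm : ∀ r, ‖p r‖ = |r| := by
    intro r
    simp only [hp_def]
    rw [norm_smul, EuclideanSpace.norm_single, norm_one, mul_one, Real.norm_eq_abs]
  set g : ℝ → ℝ := fun r => w (p r) with hg_def
  have hpball : ∀ r : ℝ, |r| < R → p r ∈ ball (0 : EuclideanSpace ℝ (Fin n)) R := by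
    intro r hr; exact hball _ (by rw [hpnorm]; exact hr)
  have hpderiv : ∀ r : ℝ, HasDerivAt p (EuclideanSpace.single i0 (1:ℝ)) r := by
    intro r
    simp only [hp_def]
    simpa using (hasDerivAt_id r).smul_const (EuclideanSpace.single i0 (1:ℝ))
  have hgd : ∀ r : ℝ, |r| < R →
      HasDerivAt g (fderiv ℝ w (p r) (EuclideanSpace.single i0 (1:ℝ))) r := by
    intro r hr
    have hw' : HasFDerivAt w (fderiv ℝ w (p r)) (p r) :=
      ((hw2 _ (hpball r hr)).differentiableAt (by norm_num)).hasFDerivAt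
    exact hw'.comp_hasDerivAt r (hpderiv r)
  -- antitone
  have hgant : ∀ a b : ℝ, 0 ≤ a → a ≤ b → g b ≤ g a := by
    intro a b ha hab
    apply hwrad
    rw [hpnorm, hpnorm, abs_of_nonneg ha, abs_of_nonneg (le_trans ha hab)]
    exact hab
  have hg'nonpos : ∀ r : ℝ, 0 < r → r < R → deriv g r ≤ 0 := by
    intro r hr hrR
    have hd0 := hgd r (by rw [abs_of_pos hr]; exact hrR)
    have hd : HasDerivAt g (deriv g r) r := by rw [hd0.deriv]; exact hd0
    have h := hasDerivAt_iff_tendsto_slope.mp hd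
    have h2 : Filter.Tendsto (slope g r) (nhdsWithin r (Set.Ioi r)) (nhds (deriv g r)) :=
      h.mono_left (nhdsWithin_mono r (by intro z hz; exact ne_of_gt hz))
    refine le_of_tendsto h2 ?_
    filter_upwards [self_mem_nhdsWithin] with u hu
    have : g u ≤ g r := hgant r u hr.le (le_of_lt hu)
    rw [slope_def_field]
    have hur : 0 < u - r := sub_pos.mpr hu
    exact div_nonpos_of_nonpos_of_nonneg (by linarith) hur.le
  -- second derivative along radius
  have hFp' : ∀ r : ℝ, |r| < R →
      HasDerivAt (fun ρ => fderiv ℝ w (p ρ))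
        (fderiv ℝ (fderiv ℝ w) (p r) (EuclideanSpace.single i0 (1:ℝ))) r := by
    intro r hr
    exact (hDF _ (hpball r hr)).hasFDerivAt.comp_hasDerivAt r (hpderiv r)
  have hg2 : ∀ r : ℝ, |r| < R →
      HasDerivAt (fun ρ => fderiv ℝ w (p ρ) (EuclideanSpace.single i0 (1:ℝ)))
        (fderiv ℝ (fderiv ℝ w) (p r) (EuclideanSpace.single i0 (1:ℝ))
          (EuclideanSpace.single i0 (1:ℝ))) r := by
    intro r hr
    have := (hFp' r hr).clm_apply (hasDerivAt_const r (EuclideanSpace.single i0 (1:ℝ)))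
    simpa using this
  have hderiv_g_ev : ∀ r : ℝ, |r| < R →
      deriv g =ᶠ[nhds r] (fun ρ => fderiv ℝ w (p ρ) (EuclideanSpace.single i0 (1:ℝ))) := by
    intro r hr
    obtain ⟨ha1, ha2⟩ := abs_lt.mp hr
    have hmem : Set.Ioo (-R) R ∈ nhds r := Ioo_mem_nhds ha1 ha2
    filter_upwards [hmem] with ρ hρ
    exact (hgd ρ (abs_lt.mpr ⟨hρ.1, hρ.2⟩)).deriv
  have hdd : ∀ r : ℝ, |r| < R → deriv (deriv g) r =
      fderiv ℝ (fderiv ℝ w) (p r) (EuclideanSpace.single i0 (1:ℝ))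
        (EuclideanSpace.single i0 (1:ℝ)) := by
    intro r hr
    rw [Filter.EventuallyEq.deriv_eq (hderiv_g_ev r hr)]
    exact (hg2 r hr).deriv
  -- tangential second derivatives
  have htang : ∀ r : ℝ, 0 < r → r < R → ∀ i : Fin n, i ≠ i0 →
      fderiv ℝ (fderiv ℝ w) (p r) (EuclideanSpace.single i (1:ℝ)) (EuclideanSpace.single i (1:ℝ))
        = fderiv ℝ w (p r) (EuclideanSpace.single i0 (1:ℝ)) / r := by
    intro r hr hrR i hi
    set γ : ℝ → EuclideanSpace ℝ (Fin n) := fun θ =>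
      (r * Real.cos θ) • EuclideanSpace.single i0 (1:ℝ)
        + (r * Real.sin θ) • EuclideanSpace.single i (1:ℝ) with hγ_def
    set γ' : ℝ → EuclideanSpace ℝ (Fin n) := fun θ =>
      (-(r * Real.sin θ)) • EuclideanSpace.single i0 (1:ℝ)
        + (r * Real.cos θ) • EuclideanSpace.single i (1:ℝ) with hγ'_def
    have hortho : (inner ℝ (EuclideanSpace.single i0 (1:ℝ)) (EuclideanSpace.single i (1:ℝ)) : ℝ) = 0 := by
      rw [EuclideanSpace.inner_single_left]
      simp only [EuclideanSpace.single_apply, map_one, one_mul]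
      rw [if_neg (fun h => hi (Fin.ext_iff.mpr (Fin.ext_iff.mp h).symm))]
    have hγnorm : ∀ θ, ‖γ θ‖ = r := by
      intro θ
      have hsq : ‖γ θ‖^2 = r^2 := by
        simp only [hγ_def]
        rw [norm_add_sq_real, inner_smul_left, inner_smul_right, hortho,
          norm_smul, norm_smul, EuclideanSpace.norm_single, EuclideanSpace.norm_single, norm_one]
        simp only [mul_one, Real.norm_eq_abs, map_mul, RCLike.star_def, conj_trivial,
          mul_zero, add_zero]
        rw [sq_abs, sq_abs]
        nlinarith [Real.sin_sq_add_cos_sq θ]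
      nlinarith [norm_nonneg (γ θ), sq_nonneg (‖γ θ‖ - r), sq_nonneg (‖γ θ‖ + r)]
    have hγ0 : γ 0 = p r := by
      simp only [hγ_def, hp_def, Real.cos_zero, Real.sin_zero, mul_one, mul_zero, zero_smul,
        add_zero]
    have hγball : ∀ θ, γ θ ∈ ball (0 : EuclideanSpace ℝ (Fin n)) R := fun θ =>
      hball _ (by rw [hγnorm]; exact hrR)
    have hγd : ∀ θ, HasDerivAt γ (γ' θ) θ := by
      intro θ
      simp only [hγ_def, hγ'_def]
      have h1 : HasDerivAt (fun θ => (r * Real.cos θ) • EuclideanSpace.single i0 (1:ℝ))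
          ((-(r * Real.sin θ)) • EuclideanSpace.single i0 (1:ℝ)) θ := by
        have := ((Real.hasDerivAt_cos θ).const_mul r).smul_const (EuclideanSpace.single i0 (1:ℝ))
        exact this.congr_deriv (by rw [mul_neg])
      have h2 : HasDerivAt (fun θ => (r * Real.sin θ) • EuclideanSpace.single i (1:ℝ))
          ((r * Real.cos θ) • EuclideanSpace.single i (1:ℝ)) θ := by
        exact ((Real.hasDerivAt_sin θ).const_mul r).smul_const _
      exact h1.add h2
    have hwγ : ∀ θ, w (γ θ) = g r := by
      intro θ
      have h1 : ‖γ θ‖ = ‖p r‖ := by rw [hγnorm, hpnorm, abs_of_pos hr]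
      exact le_antisymm (hwrad (p r) (γ θ) h1.ge) (hwrad (γ θ) (p r) h1.le)
    have hzero : ∀ θ, fderiv ℝ w (γ θ) (γ' θ) = 0 := by
      intro θ
      have h1 : HasDerivAt (fun θ => w (γ θ)) (fderiv ℝ w (γ θ) (γ' θ)) θ := by
        have hw' : HasFDerivAt w (fderiv ℝ w (γ θ)) (γ θ) :=
          ((hw2 _ (hγball θ)).differentiableAt (by norm_num)).hasFDerivAt
        exact hw'.comp_hasDerivAt θ (hγd θ)
      have h2 : (fun θ => w (γ θ)) = fun _ => g r := funext hwγ
      rw [h2] at h1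
      exact h1.unique (hasDerivAt_const θ (g r))
    have hγ'd : HasDerivAt γ' ((-r) • EuclideanSpace.single i0 (1:ℝ)) 0 := by
      have h1 : HasDerivAt (fun θ => (-(r * Real.sin θ)) • EuclideanSpace.single i0 (1:ℝ))
          ((-(r * Real.cos 0)) • EuclideanSpace.single i0 (1:ℝ)) 0 := by
        have := (((Real.hasDerivAt_sin 0).const_mul r).neg).smul_const
          (EuclideanSpace.single i0 (1:ℝ))
        exact this
      have h2 : HasDerivAt (fun θ => (r * Real.cos θ) • EuclideanSpace.single i (1:ℝ))
          ((-(r * Real.sin 0)) • EuclideanSpace.single i (1:ℝ)) 0 := by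
        have := ((Real.hasDerivAt_cos 0).const_mul r).smul_const (EuclideanSpace.single i (1:ℝ))
        exact this.congr_deriv (by rw [mul_neg])
      have h3 := h1.add h2
      simp only [Real.sin_zero, Real.cos_zero, mul_zero, neg_zero, zero_smul, add_zero,
        mul_one] at h3
      simp only [hγ'_def]
      exact h3
    have hFγd : HasDerivAt (fun θ => fderiv ℝ w (γ θ)) (fderiv ℝ (fderiv ℝ w) (p r) (γ' 0)) 0 := by
      have h := (hDF _ (hγball 0)).hasFDerivAt.comp_hasDerivAt 0 (hγd 0)
      rw [hγ0] at h
      exact h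
    have hψ : HasDerivAt (fun θ => fderiv ℝ w (γ θ) (γ' θ))
        (fderiv ℝ (fderiv ℝ w) (p r) (γ' 0) (γ' 0)
          + fderiv ℝ w (γ 0) ((-r) • EuclideanSpace.single i0 (1:ℝ))) 0 :=
      hFγd.clm_apply hγ'd
    have hψ0 : (fun θ => fderiv ℝ w (γ θ) (γ' θ)) = fun _ => (0 : ℝ) := funext hzero
    rw [hψ0] at hψ
    have huniq : fderiv ℝ (fderiv ℝ w) (p r) (γ' 0) (γ' 0)
        + fderiv ℝ w (γ 0) ((-r) • EuclideanSpace.single i0 (1:ℝ)) = 0 :=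
      hψ.unique (hasDerivAt_const 0 0)
    have hγ'0 : γ' 0 = r • EuclideanSpace.single i (1:ℝ) := by
      simp only [hγ'_def, Real.sin_zero, Real.cos_zero, mul_zero, neg_zero, zero_smul, mul_one,
        zero_add]
    rw [hγ'0, hγ0] at huniq
    simp only [_root_.map_smul, ContinuousLinearMap.smul_apply, smul_eq_mul, map_neg, neg_smul] at huniq
    field_simp
    nlinarith [huniq]
  -- Laplacian at p r
  have hLap_pr : ∀ r : ℝ, 0 < r → r < R →
      Lap (p r) = fderiv ℝ (fderiv ℝ w) (p r) (EuclideanSpace.single i0 (1:ℝ))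
          (EuclideanSpace.single i0 (1:ℝ))
        + (n - 1 : ℝ) * (fderiv ℝ w (p r) (EuclideanSpace.single i0 (1:ℝ)) / r) := by
    intro r hr hrR
    have hrball : p r ∈ ball (0 : EuclideanSpace ℝ (Fin n)) R :=
      hpball r (by rw [abs_of_pos hr]; exact hrR)
    rw [hLap_eq _ hrball]
    rw [← Finset.sum_erase_add _ _ (Finset.mem_univ i0)]
    have hsum : ∑ i ∈ Finset.univ.erase i0, fderiv ℝ (fderiv ℝ w) (p r)
          (EuclideanSpace.single i (1:ℝ)) (EuclideanSpace.single i (1:ℝ))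
        = (n - 1 : ℝ) * (fderiv ℝ w (p r) (EuclideanSpace.single i0 (1:ℝ)) / r) := by
      rw [Finset.sum_congr rfl (fun i hi => htang r hr hrR i (Finset.mem_erase.mp hi).1)]
      rw [Finset.sum_const, Finset.card_erase_of_mem (Finset.mem_univ i0)]
      simp only [Finset.card_univ, Fintype.card_fin, nsmul_eq_mul]
      congr 1
      rw [Nat.cast_sub hn]
      simp
    rw [hsum]
    ring
  -- t₁
  set t₁ := (‖z₀‖ + ‖y‖) / 2 with ht₁_def
  have hr₀t₁ : ‖z₀‖ < t₁ := by rw [ht₁_def]; linarith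
  have ht₁t : t₁ < ‖y‖ := by rw [ht₁_def]; linarith
  have ht₁pos : 0 < t₁ := lt_trans hr₀pos hr₀t₁
  -- second derivative nonneg on (t₁, R)
  have hg''nonneg : ∀ r ∈ Set.Ioo t₁ R, 0 ≤ deriv (deriv g) r := by
    intro r hrmem
    obtain ⟨hr1, hr2⟩ := hrmem
    have hrpos : 0 < r := lt_trans ht₁pos hr1
    have hrabs : |r| < R := by rw [abs_of_pos hrpos]; exact hr2
    have hrball : p r ∈ ball (0 : EuclideanSpace ℝ (Fin n)) R := hpball r hrabs
    have hLpos : 0 ≤ Lap (p r) := by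
      apply hLap_nonneg _ hrball
      rw [hpnorm, abs_of_pos hrpos]
      linarith
    have hg'le : deriv g r ≤ 0 := hg'nonpos r hrpos hr2
    have hg'eq : deriv g r = fderiv ℝ w (p r) (EuclideanSpace.single i0 (1:ℝ)) :=
      (hgd r hrabs).deriv
    rw [hdd r hrabs]
    have hLeq := hLap_pr r hrpos hr2
    rw [← hg'eq] at hLeq
    have hn1 : (0 : ℝ) ≤ (n - 1 : ℝ) := by
      have : (1 : ℝ) ≤ n := by exact_mod_cast hn
      linarith
    have : (n - 1 : ℝ) * (deriv g r / r) ≤ 0 :=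
      mul_nonpos_of_nonneg_of_nonpos hn1 (div_nonpos_of_nonpos_of_nonneg hg'le hrpos.le)
    linarith
  -- convexity on [t₁, R]
  have hgcont : Continuous g := by
    simp only [hg_def]
    exact hwcont.comp (by continuity)
  have hgdiff : DifferentiableOn ℝ g (interior (Set.Icc t₁ R)) := by
    rw [interior_Icc]
    intro r hr
    have hrpos : 0 < r := lt_trans ht₁pos hr.1
    exact ((hgd r (by rw [abs_of_pos hrpos]; exact hr.2)).differentiableAt).differentiableWithinAt
  have hgdiff2 : DifferentiableOn ℝ (deriv g) (interior (Set.Icc t₁ R)) := by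
    rw [interior_Icc]
    intro r hr
    have hrpos : 0 < r := lt_trans ht₁pos hr.1
    have hrabs : |r| < R := by rw [abs_of_pos hrpos]; exact hr.2
    have hdiff := (hg2 r hrabs).differentiableAt
    exact (hdiff.congr_of_eventuallyEq (hderiv_g_ev r hrabs)).differentiableWithinAt
  have ht₁R : t₁ < R := lt_trans ht₁t htR
  have hconv : ConvexOn ℝ (Set.Icc t₁ R) g := by
    apply convexOn_of_deriv2_nonneg (convex_Icc t₁ R) hgcont.continuousOn hgdiff hgdiff2
    intro r hr
    rw [interior_Icc] at hr
    show 0 ≤ deriv^[2] g r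
    simp only [Function.iterate_succ, Function.iterate_zero, Function.comp_apply, Function.id_def]
    exact hg''nonneg r hr
  -- final contradiction
  set a := (R - ‖y‖) / (R - t₁) with ha_def
  set b := (‖y‖ - t₁) / (R - t₁) with hb_def
  have hden : 0 < R - t₁ := by linarith
  have ha : 0 ≤ a := div_nonneg (by linarith) hden.le
  have hb : 0 < b := div_pos (by linarith) hden
  have hab : a + b = 1 := by rw [ha_def, hb_def]; field_simp; ring
  have hcomb : a • t₁ + b • R = ‖y‖ := by
    rw [ha_def, hb_def]
    simp only [smul_eq_mul]
    field_simp
    ring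
  have hkey := hconv.2 (Set.left_mem_Icc.mpr ht₁R.le) (Set.right_mem_Icc.mpr ht₁R.le) ha hb.le hab
  rw [hcomb] at hkey
  have hgt₁ : g t₁ = w x := hconst _ (by rw [hpnorm, abs_of_pos ht₁pos]; linarith)
    (by rw [hpnorm, abs_of_pos ht₁pos]; linarith)
  have hgt : g ‖y‖ = w x := hconst _
    (by rw [hpnorm, abs_of_nonneg (by linarith : (0:ℝ) ≤ ‖y‖)]; linarith)
    (by rw [hpnorm, abs_of_nonneg (by linarith : (0:ℝ) ≤ ‖y‖)])
  have hgR : g R = 0 := by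
    apply hwzero
    rw [mem_ball_zero_iff, hpnorm, abs_of_pos hR]
    exact lt_irrefl R
  rw [hgt₁, hgt, hgR] at hkey
  simp only [smul_eq_mul, mul_zero, add_zero] at hkey
  have haa : a < 1 := by linarith
  have hlast : a * w x < 1 * w x := mul_lt_mul_of_pos_right haa hc
  linarith
end
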